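/- arXiv:2407.07459 — 3 statements merged into one kernel-verified Lean document; each statement's English description precedes it below -/
import Mathlib

section
/- Let Q be a parabolic subgroup of W and let D = v W_K v⁻¹ be a parabolic subgroup with |K| = 2 (a dihedral parabolic subgroup). Then the set T ∩ Q ∩ D is either empty, or consists of a single reflection, or equals T ∩ D (the set of all reflections of D). -/
open scoped Classical

namespace DGM

variable {S : Type*} {W : Type*} [Group W] {M : CoxeterMatrix S}

/-- The standard parabolic subgroup `W_I` of `W`, generated by the simple
reflections indexed by `I ⊆ S`. -/
def WP (cs : CoxeterSystem M W) (I : Set S) : Subgroup W :=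
  Subgroup.closure (cs.simple '' I)

/-- A parabolic subgroup of `W`: a subgroup of the form `v W_I v⁻¹`. -/
def IsParabolic (cs : CoxeterSystem M W) (H : Subgroup W) : Prop :=
  ∃ (v : W) (I : Set S), H = (WP cs I).map (MulAut.conj v).toMonoidHom

/-- The set `T` of reflections of `W`. -/
def Refl (cs : CoxeterSystem M W) : Set W := {t | cs.IsReflection t}

noncomputable section

variable {S : Type*} {W : Type*} [Group W] {M : CoxeterMatrix S}

open CoxeterSystem

/-- The vector space of the geometric representation. -/
abbrev V (S : Type*) := S →₀ ℝ

/-- Simple roots. -/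
def al (i : S) : V S := Finsupp.single i 1

lemma al_ne_zero (i : S) : al i ≠ 0 := by
  simp [al, Finsupp.single_eq_zero]

@[simp] lemma al_apply_self (i : S) : al i i = 1 := by simp [al]

lemma al_apply_ne {i j : S} (h : j ≠ i) : al i j = 0 := by
  simp [al, Finsupp.single_apply_eq_zero]; tauto

variable (M) in
/-- Entries of the bilinear form. -/
def kf (i j : S) : ℝ := if M i j = 0 then -1 else -Real.cos (Real.pi / (M i j))

lemma kf_symm (i j : S) : kf M i j = kf M j i := by rw [kf, kf, M.symmetric i j]

lemma kf_self (i : S) : kf M i i = 1 := by simp [kf, M.diagonal i, Real.cos_pi]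

lemma kf_neg (i j : S) (h : i ≠ j) : kf M i j ≤ 0 := by
  rw [kf]
  split_ifs with h0
  · norm_num
  · have h2 : 2 ≤ M i j := by
      rcases Nat.lt_or_ge (M i j) 2 with h' | h'
      · have hod := M.off_diagonal i j h
        interval_cases hmm : M i j <;> simp_all
      · exact h'
    have : Real.pi / (M i j) ≤ Real.pi / 2 := by
      apply div_le_div_of_nonneg_left Real.pi_pos.le (by norm_num)
      exact_mod_cast h2
    have hb : (0:ℝ) < (M i j : ℝ) := by positivity
    have : 0 ≤ Real.cos (Real.pi / (M i j)) := by
      apply Real.cos_nonneg_of_mem_Icc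
      constructor
      · have : (0:ℝ) ≤ Real.pi / (M i j) := by positivity
        linarith [Real.pi_pos]
      · linarith
    linarith

lemma kf_lower (i j : S) : -1 ≤ kf M i j := by
  rw [kf]; split_ifs
  · exact le_refl _
  · have := Real.cos_le_one (Real.pi / (M i j))
    linarith

variable (M) in
/-- The bilinear form of the geometric representation. -/
def BF : V S →ₗ[ℝ] V S →ₗ[ℝ] ℝ :=
  Finsupp.lift (V S →ₗ[ℝ] ℝ) ℝ S (fun i => Finsupp.lift ℝ ℝ S (fun j => kf M i j))

@[simp] lemma BF_al_al (i j : S) : BF M (al i) (al j) = kf M i j := by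
  simp [BF, al, Finsupp.lift_apply, Finsupp.sum_single_index]

lemma BF_symm (v w : V S) : BF M v w = BF M w v := by
  induction v using Finsupp.induction_linear with
  | zero => simp
  | add f g hf hg => simp [hf, hg]
  | single a b =>
    induction w using Finsupp.induction_linear with
    | zero => simp
    | add f g hf hg => simp [hf, hg]
    | single c d =>
      have : (Finsupp.single a b : V S) = b • al a := by simp [al, Finsupp.smul_single]
      rw [this]
      have : (Finsupp.single c d : V S) = d • al c := by simp [al, Finsupp.smul_single]
      rw [this]
      simp [kf_symm a c]
      ring


section Stage2

variable {S : Type*} {M : CoxeterMatrix S}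

/-- Linear functional used to define the simple reflection. -/
def cvec (M : CoxeterMatrix S) (i : S) : V S →ₗ[ℝ] ℝ := (2:ℝ) • ((BF M).flip (al i))

lemma cvec_apply (i : S) (v : V S) : cvec M i v = 2 * BF M v (al i) := by
  simp [cvec]

lemma cvec_al (i : S) : cvec M i (al i) = 2 := by
  simp [cvec_apply, kf_self]

/-- The simple reflection on `V`. -/
def rf (M : CoxeterMatrix S) (i : S) : V S ≃ₗ[ℝ] V S := Module.reflection (cvec_al (M := M) i)

lemma rf_apply (i : S) (v : V S) : rf M i v = v - (2 * BF M v (al i)) • al i := by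
  rw [rf, Module.reflection_apply, cvec_apply]

lemma rf_al_self (i : S) : rf M i (al i) = -al i := Module.reflection_apply_self _

lemma rf_involutive (i : S) : Function.Involutive (rf M i) :=
  Module.involutive_reflection (cvec_al (M := M) i)

@[simp] lemma rf_mul_self (i : S) : rf M i * rf M i = 1 := by
  apply LinearEquiv.toLinearMap_injective
  apply LinearMap.ext
  intro v
  simpa using rf_involutive (M := M) i v

lemma BF_rf_rf (i : S) (v w : V S) : BF M (rf M i v) (rf M i w) = BF M v w := by
  rw [rf_apply, rf_apply]
  have h1 : BF M (al i) w = BF M w (al i) := BF_symm _ _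
  have h2 : BF M (al i) (al i) = 1 := by simp [kf_self]
  simp only [map_sub, map_smul, LinearMap.sub_apply, LinearMap.smul_apply, smul_eq_mul, h2]
  rw [h1]
  ring

/-- The Chebyshev-like sequence. -/
def fs (d : ℝ) : ℕ → ℝ
  | 0 => 0
  | 1 => 1
  | (k+2) => 2*d*(fs d (k+1)) - fs d k

@[simp] lemma fs_zero (d : ℝ) : fs d 0 = 0 := rfl
@[simp] lemma fs_one (d : ℝ) : fs d 1 = 1 := rfl
lemma fs_two (d : ℝ) : fs d 2 = 2*d := by simp [fs]
lemma fs_succ_succ (d : ℝ) (k : ℕ) : fs d (k+2) = 2*d*(fs d (k+1)) - fs d k := rfl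

lemma fs_sin (θ : ℝ) (k : ℕ) :
    fs (Real.cos θ) k * Real.sin θ = Real.sin (k * θ) := by
  induction k using Nat.twoStepInduction with
  | zero => simp
  | one => simp
  | more k ih1 ih2 =>
    rw [fs_succ_succ]
    have e1 : ((k+2 : ℕ) : ℝ) * θ = ((k+1 : ℕ) : ℝ) * θ + θ := by push_cast; ring
    have e2 : ((k : ℕ) : ℝ) * θ = ((k+1 : ℕ) : ℝ) * θ - θ := by push_cast; ring
    rw [e1, Real.sin_add]
    have := Real.sin_sub (((k+1 : ℕ) : ℝ) * θ) θ
    rw [← e2] at this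
    linear_combination (2*Real.cos θ) * ih2 - ih1 - this

lemma fs_nat (k : ℕ) : fs 1 k = k := by
  induction k using Nat.twoStepInduction with
  | zero => simp
  | one => simp
  | more k ih1 ih2 =>
    rw [fs_succ_succ, ih1, ih2]
    push_cast; ring

end Stage2

section Stage3

variable {S : Type*} {M : CoxeterMatrix S}

lemma mulApply {S : Type*} (e1 e2 : V S ≃ₗ[ℝ] V S) (v : V S) : (e1 * e2) v = e1 (e2 v) := rfl

lemma BF_al_ij (i j : S) : BF M (al i) (al j) = -(-kf M i j) := by simp

lemma rf_al_other {i j : S} : rf M i (al j) = al j + (2 * (-kf M i j)) • al i := by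
  rw [rf_apply]
  rw [BF_al_ij j i, kf_symm j i]
  module

lemma rfrf_al_i {i j : S} :
    (rf M i * rf M j) (al i) =
      (4*(-kf M i j)^2 - 1) • al i + (2*(-kf M i j)) • al j := by
  set d := -kf M i j with hd
  have h1 : rf M j (al i) = al i + (2*d) • al j := by rw [rf_al_other, kf_symm]
  show rf M i (rf M j (al i)) = _
  rw [h1, map_add, map_smul, rf_al_self, rf_al_other]
  module

lemma rfrf_al_j {i j : S} :
    (rf M i * rf M j) (al j) =
      (-(2*(-kf M i j))) • al i + (-1 : ℝ) • al j := by
  set d := -kf M i j with hd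
  show rf M i (rf M j (al j)) = _
  rw [rf_al_self, map_neg, rf_al_other]
  module

lemma pair_pow_al_i {i j : S} (k : ℕ) :
    ((rf M i * rf M j)^k) (al i) =
      fs (-kf M i j) (2*k+1) • al i + fs (-kf M i j) (2*k) • al j := by
  set d := -kf M i j with hd
  induction k with
  | zero => simp
  | succ k ih =>
    have g1 : fs d (2*(k+1)) = 2*d*fs d (2*k+1) - fs d (2*k) := by
      rw [show 2*(k+1) = (2*k)+2 by ring, fs_succ_succ]
    have g2 : fs d (2*(k+1)+1) = 2*d*fs d (2*(k+1)) - fs d (2*k+1) := by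
      rw [show 2*(k+1)+1 = (2*k+1)+2 by ring, fs_succ_succ, show 2*k+1+1 = 2*k+2 by ring,
        show 2*(k+1) = 2*k+2 by ring]
    rw [pow_succ', mulApply, ih, map_add, map_smul, map_smul,
      rfrf_al_i, rfrf_al_j, g2, g1]
    simp only [← hd]
    module

lemma pair_pow_al_j {i j : S} (k : ℕ) :
    ((rf M i * rf M j)^k) (al j) =
      (-(fs (-kf M i j) (2*k))) • al i +
        (fs (-kf M i j) (2*k+1) - 2*(-kf M i j)*(fs (-kf M i j) (2*k))) • al j := by
  set d := -kf M i j with hd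
  induction k with
  | zero => simp
  | succ k ih =>
    have g1 : fs d (2*(k+1)) = 2*d*fs d (2*k+1) - fs d (2*k) := by
      rw [show 2*(k+1) = (2*k)+2 by ring, fs_succ_succ]
    have g2 : fs d (2*(k+1)+1) = 2*d*fs d (2*(k+1)) - fs d (2*k+1) := by
      rw [show 2*(k+1)+1 = (2*k+1)+2 by ring, fs_succ_succ, show 2*k+1+1 = 2*k+2 by ring,
        show 2*(k+1) = 2*k+2 by ring]
    rw [pow_succ', mulApply, ih, map_add, map_smul, map_smul,
      rfrf_al_i, rfrf_al_j, g2, g1]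
    simp only [← hd]
    module

lemma rf_fixed {i : S} {r : V S} (h : BF M r (al i) = 0) : rf M i r = r := by
  rw [rf_apply, h]
  simp

lemma pair_pow_fixed {i j : S} {r : V S} (hi : BF M r (al i) = 0) (hj : BF M r (al j) = 0)
    (k : ℕ) : ((rf M i * rf M j)^k) r = r := by
  induction k with
  | zero => simp
  | succ k ih =>
    rw [pow_succ', mulApply, ih]
    show rf M i (rf M j r) = r
    rw [rf_fixed hj, rf_fixed hi]

lemma d_cos {i j : S} (h2 : 2 ≤ M i j) :
    -kf M i j = Real.cos (Real.pi / (M i j)) := by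
  rw [kf]
  have : M i j ≠ 0 := by omega
  simp [this]

lemma theta_pos {m : ℕ} (h2 : 2 ≤ m) : 0 < Real.pi / m := by
  apply div_pos Real.pi_pos
  exact_mod_cast Nat.lt_of_lt_of_le Nat.zero_lt_two h2

lemma theta_lt_pi {m : ℕ} (h2 : 2 ≤ m) : Real.pi / m < Real.pi := by
  have h0 : (0:ℝ) < m := by exact_mod_cast Nat.lt_of_lt_of_le Nat.zero_lt_two h2
  rw [div_lt_iff₀ h0]
  have h2' : (2:ℝ) ≤ (m:ℝ) := by exact_mod_cast h2
  nlinarith [Real.pi_pos]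

lemma sin_theta_pos {m : ℕ} (h2 : 2 ≤ m) : 0 < Real.sin (Real.pi / m) :=
  Real.sin_pos_of_pos_of_lt_pi (theta_pos h2) (theta_lt_pi h2)

lemma fs_2m {m : ℕ} (h2 : 2 ≤ m) : fs (Real.cos (Real.pi/m)) (2*m) = 0 := by
  have h := fs_sin (Real.pi/m) (2*m)
  have hm : (0:ℝ) < m := by exact_mod_cast Nat.lt_of_lt_of_le Nat.zero_lt_two h2
  have e : ((2*m : ℕ) : ℝ) * (Real.pi/m) = 2 * Real.pi := by
    push_cast; field_simp
  rw [e, Real.sin_two_pi] at h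
  have := sin_theta_pos h2
  exact by nlinarith [h]

lemma fs_2m1 {m : ℕ} (h2 : 2 ≤ m) : fs (Real.cos (Real.pi/m)) (2*m+1) = 1 := by
  have h := fs_sin (Real.pi/m) (2*m+1)
  have hm : (0:ℝ) < m := by exact_mod_cast Nat.lt_of_lt_of_le Nat.zero_lt_two h2
  have e : ((2*m+1 : ℕ) : ℝ) * (Real.pi/m) = 2 * Real.pi + Real.pi/m := by
    push_cast; field_simp
  rw [e] at h
  rw [Real.sin_add] at h
  simp [Real.sin_two_pi, Real.cos_two_pi] at h
  have := sin_theta_pos h2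
  exact by nlinarith [h]

lemma d_sq_lt_one {m : ℕ} (h2 : 2 ≤ m) : (Real.cos (Real.pi/m))^2 < 1 := by
  have h := Real.sin_sq_add_cos_sq (Real.pi/m)
  have := sin_theta_pos h2
  nlinarith

theorem pair_relation (i j : S) : ((rf M i * rf M j)^(M i j)) = 1 := by
  rcases eq_or_ne i j with rfl | hij
  · rw [M.diagonal i, pow_one, rf_mul_self]
  rcases Nat.eq_zero_or_pos (M i j) with h0 | hpos
  · rw [h0, pow_zero]
  have h2 : 2 ≤ M i j := by
    have := M.off_diagonal i j hij
    omega
  set m := M i j with hm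
  set d := -kf M i j with hd
  have hdc : d = Real.cos (Real.pi/m) := d_cos h2
  have h2m : fs d (2*m) = 0 := by rw [hdc]; exact fs_2m h2
  have h2m1 : fs d (2*m+1) = 1 := by rw [hdc]; exact fs_2m1 h2
  have hd2 : d^2 < 1 := by rw [hdc]; exact d_sq_lt_one h2
  have hden : 1 - d^2 ≠ 0 := by nlinarith
  apply LinearEquiv.toLinearMap_injective
  apply LinearMap.ext
  intro v
  set a := (BF M v (al i) + d * BF M v (al j))/(1-d^2) with ha
  set b := (BF M v (al j) + d * BF M v (al i))/(1-d^2) with hb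
  set r := v - a • al i - b • al j with hr
  have hBij : BF M (al i) (al j) = -d := by rw [hd]; simp
  have hBji : BF M (al j) (al i) = -d := by rw [hd, kf_symm]; simp
  have hri : BF M r (al i) = 0 := by
    rw [hr]
    simp only [map_sub, map_smul, LinearMap.sub_apply, LinearMap.smul_apply, smul_eq_mul]
    rw [hBji]
    simp only [BF_al_al, kf_self]
    rw [ha, hb]
    field_simp
    ring
  have hrj : BF M r (al j) = 0 := by
    rw [hr]
    simp only [map_sub, map_smul, LinearMap.sub_apply, LinearMap.smul_apply, smul_eq_mul]
    rw [hBij]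
    simp only [BF_al_al, kf_self]
    rw [ha, hb]
    field_simp
    ring
  have hv : v = a • al i + b • al j + r := by rw [hr]; module
  show ((rf M i * rf M j)^m) v = v
  rw [hv, map_add, map_add, map_smul, map_smul, pair_pow_al_i, pair_pow_al_j,
    pair_pow_fixed hri hrj, ← hd, h2m, h2m1]
  module

lemma rf_liftable : M.IsLiftable (fun i => rf M i) := fun i j => pair_relation i j

variable {W : Type*} [Group W] (cs : CoxeterSystem M W)

/-- The geometric representation. -/
def sgm : W →* (V S ≃ₗ[ℝ] V S) := cs.lift ⟨fun i => rf M i, rf_liftable⟩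

@[simp] lemma sgm_simple (i : S) : sgm cs (cs.simple i) = rf M i :=
  cs.lift_apply_simple rf_liftable i

end Stage3

section Stage4

open CoxeterSystem

variable {S : Type*} {M : CoxeterMatrix S} {W : Type*} [Group W] (cs : CoxeterSystem M W)

lemma sgm_mul_apply (w w' : W) (v : V S) :
    sgm cs (w * w') v = sgm cs w (sgm cs w' v) := by
  rw [map_mul]; rfl

lemma BF_sgm (w : W) (v u : V S) : BF M (sgm cs w v) (sgm cs w u) = BF M v u := by
  induction w using CoxeterSystem.simple_induction cs generalizing v u with
  | simple i => simp only [sgm_simple]; exact BF_rf_rf i v u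
  | one => simp
  | mul w w' h h' => rw [sgm_mul_apply, sgm_mul_apply, h, h']

lemma sgm_inv_apply (w : W) (v : V S) : sgm cs w⁻¹ (sgm cs w v) = v := by
  rw [← sgm_mul_apply, inv_mul_cancel, map_one]; rfl

lemma sgm_inv_apply' (w : W) (v : V S) : sgm cs w (sgm cs w⁻¹ v) = v := by
  rw [← sgm_mul_apply, mul_inv_cancel, map_one]; rfl

/-- The root associated to the expression `w * s c * w⁻¹` of a reflection. -/
def rt (w : W) (c : S) : V S := sgm cs w (al c)

lemma rt_ne_zero (w : W) (c : S) : rt cs w c ≠ 0 := by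
  rw [rt]
  intro h
  have := (sgm cs w).injective (a₁ := al c) (a₂ := 0) (by simpa using h)
  exact al_ne_zero c this

lemma BF_rt_rt (w : W) (c : S) : BF M (rt cs w c) (rt cs w c) = 1 := by
  rw [rt, BF_sgm]
  simp [kf_self]

lemma sgm_reflection (w : W) (c : S) (v : V S) :
    sgm cs (w * cs.simple c * w⁻¹) v = v - (2 * BF M v (rt cs w c)) • rt cs w c := by
  rw [sgm_mul_apply, sgm_mul_apply, sgm_simple, rf_apply]
  rw [map_sub, map_smul]
  rw [sgm_inv_apply']
  have : BF M (sgm cs w⁻¹ v) (al c) = BF M v (rt cs w c) := by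
    conv_lhs => rw [← BF_sgm cs w]
    rw [sgm_inv_apply']
    rfl
  rw [this]
  rfl

end Stage4

section Stage5

open CoxeterSystem

variable {S : Type*} {M : CoxeterMatrix S} {W : Type*} [Group W] (cs : CoxeterSystem M W)

/-- Nonnegative vectors. -/
def Pos (v : V S) : Prop := ∀ c, 0 ≤ v c

lemma Pos_al (i : S) : Pos (al i) := by
  intro c
  rcases eq_or_ne c i with rfl | h
  · simp
  · rw [al_apply_ne h]

lemma Pos.add {v u : V S} (hv : Pos v) (hu : Pos u) : Pos (v + u) := by
  intro c
  have := hv c; have := hu c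
  simp only [Finsupp.add_apply]
  linarith

lemma Pos.smul {a : ℝ} {v : V S} (ha : 0 ≤ a) (hv : Pos v) : Pos (a • v) := by
  intro c
  have := hv c
  simp only [Finsupp.smul_apply, smul_eq_mul]
  exact mul_nonneg ha this

/-- The plane spanned by two simple roots. -/
def Pl (i j : S) : Submodule ℝ (V S) := Submodule.span ℝ {al i, al j}

lemma al_mem_Pl_left (i j : S) : al i ∈ Pl i j :=
  Submodule.subset_span (by simp)

lemma al_mem_Pl_right (i j : S) : al j ∈ Pl i j :=
  Submodule.subset_span (by simp)

lemma Pl_coord {i j c : S} {v : V S} (hv : v ∈ Pl i j) (hci : c ≠ i) (hcj : c ≠ j) :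
    v c = 0 := by
  rcases Submodule.mem_span_pair.mp hv with ⟨a, b, rfl⟩
  simp [al_apply_ne hci, al_apply_ne hcj]

lemma Pl_repr {i j : S} (hij : i ≠ j) {v : V S} (hv : v ∈ Pl i j) :
    v = (v i) • al i + (v j) • al j := by
  rcases Submodule.mem_span_pair.mp hv with ⟨a, b, rfl⟩
  have h1 : (a • al i + b • al j : V S) i = a := by
    simp [Finsupp.add_apply, Finsupp.smul_apply, al_apply_ne hij]
  have h2 : (a • al i + b • al j : V S) j = b := by
    simp [Finsupp.add_apply, Finsupp.smul_apply, al_apply_ne (Ne.symm hij)]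
  rw [h1, h2]

lemma sgm_sub_mem_plane {i j : S} :
    ∀ x ∈ Subgroup.closure {cs.simple i, cs.simple j}, ∀ v : V S,
      sgm cs x v - v ∈ Pl i j := by
  intro x hx
  refine Subgroup.closure_induction (p := fun g _ => ∀ v : V S, sgm cs g v - v ∈ Pl i j)
    ?_ ?_ ?_ ?_ hx
  · rintro y (rfl | rfl) v
    · rw [sgm_simple, rf_apply]
      have : v - (2 * BF M v (al i)) • al i - v = -((2 * BF M v (al i)) • al i) := by abel
      rw [this]
      exact Submodule.neg_mem _ (Submodule.smul_mem _ _ (al_mem_Pl_left i j))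
    · rw [sgm_simple, rf_apply]
      have : v - (2 * BF M v (al j)) • al j - v = -((2 * BF M v (al j)) • al j) := by abel
      rw [this]
      exact Submodule.neg_mem _ (Submodule.smul_mem _ _ (al_mem_Pl_right i j))
  · intro v; simp
  · intro x y _ _ px py v
    have e : sgm cs (x*y) v - v = (sgm cs x (sgm cs y v) - sgm cs y v) + (sgm cs y v - v) := by
      rw [sgm_mul_apply]; abel
    rw [e]
    exact Submodule.add_mem _ (px _) (py _)
  · intro x _ px v
    have e : sgm cs x⁻¹ v - v = -(sgm cs x (sgm cs x⁻¹ v) - sgm cs x⁻¹ v) := by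
      rw [sgm_inv_apply']; abel
    rw [e]
    exact Submodule.neg_mem _ (px _)

lemma sgm_mem_plane {i j : S} {x : W} (hx : x ∈ Subgroup.closure {cs.simple i, cs.simple j})
    {v : V S} (hv : v ∈ Pl i j) : sgm cs x v ∈ Pl i j := by
  have := sgm_sub_mem_plane cs x hx v
  have e : sgm cs x v = (sgm cs x v - v) + v := by abel
  rw [e]
  exact Submodule.add_mem _ this hv

/-- Alternating products of simple reflections. -/
def Zel (i j : S) (k : ℕ) : W := cs.wordProd (alternatingWord i j k)

@[simp] lemma Zel_zero (i j : S) : Zel cs i j 0 = 1 := by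
  simp [Zel, alternatingWord]

lemma Zel_succ (i j : S) (k : ℕ) :
    Zel cs i j (k+1) = Zel cs j i k * cs.simple j := by
  rw [Zel, alternatingWord_succ, wordProd_concat]; rfl

@[simp] lemma Zel_one (i j : S) : Zel cs i j 1 = cs.simple j := by
  rw [Zel_succ, Zel_zero, one_mul]

lemma Zel_mem (i j : S) (k : ℕ) :
    Zel cs i j k ∈ Subgroup.closure {cs.simple i, cs.simple j} := by
  induction k generalizing i j with
  | zero => rw [Zel_zero]; exact Subgroup.one_mem _
  | succ k ih =>
    rw [Zel_succ]
    apply Subgroup.mul_mem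
    · have := ih j i
      rwa [Set.pair_comm] at this
    · exact Subgroup.subset_closure (by simp)

lemma Zel_length_le (i j : S) (k : ℕ) : cs.length (Zel cs i j k) ≤ k := by
  have := cs.length_wordProd_le (alternatingWord i j k)
  rwa [length_alternatingWord] at this

lemma Zel_braid (i j : S) : Zel cs i j (M i j) = Zel cs j i (M i j) := by
  have := cs.wordProd_braidWord_eq i j
  rw [CoxeterSystem.braidWord, CoxeterSystem.braidWord, M.symmetric j i] at this
  exact this

lemma sgm_Zel_al : ∀ (k : ℕ) {i j : S}, i ≠ j →
    sgm cs (Zel cs i j k) (al i) =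
      (if Even k then fs (-kf M i j) (k+1) • al i + fs (-kf M i j) k • al j
       else fs (-kf M i j) k • al i + fs (-kf M i j) (k+1) • al j) := by
  intro k
  induction k using Nat.twoStepInduction with
  | zero =>
    intro i j hij
    simp [fs]
  | one =>
    intro i j hij
    rw [Zel_one, sgm_simple, rf_al_other]
    rw [kf_symm j i]
    simp [fs_two]
  | more k ih1 ih2 =>
    intro i j hij
    set d := -kf M i j with hd
    have hdsymm : -kf M j i = d := by rw [hd, kf_symm]
    have step : sgm cs (Zel cs i j (k+2)) (al i) =
        -(sgm cs (Zel cs i j k) (al i)) + (2*d) • sgm cs (Zel cs j i (k+1)) (al j) := by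
      rw [show k+2 = (k+1)+1 from rfl, Zel_succ, sgm_mul_apply, sgm_simple,
        rf_al_other, kf_symm j i, ← hd]
      rw [map_add, map_smul]
      congr 1
      rw [Zel_succ, sgm_mul_apply, sgm_simple, rf_al_self, map_neg]
    rw [step, ih1 hij, ih2 (Ne.symm hij), hdsymm]
    have ek2 : fs d (k+2) = 2*d*fs d (k+1) - fs d k := fs_succ_succ d k
    have ek2' : fs d (k+1+1) = 2*d*fs d (k+1) - fs d k := fs_succ_succ d k
    have ek3 : fs d (k+2+1) = 2*d*(2*d*fs d (k+1) - fs d k) - fs d (k+1) := by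
      rw [show k+2+1 = (k+1)+2 from rfl, fs_succ_succ, ek2']
    rcases Nat.even_or_odd k with he | ho
    · have h1 : ¬ Even (k+1) := by simp [Nat.even_add_one, he]
      have h2 : Even (k+2) := by
        rcases he with ⟨t, rfl⟩; exact ⟨t+1, by ring⟩
      rw [if_pos he, if_neg h1, if_pos h2]
      simp only [← hd, ek3, ek2', ek2]
      module
    · have h1 : ¬ Even k := Nat.not_even_iff_odd.mpr ho
      have he1 : Even (k+1) := Nat.even_add_one.mpr h1
      have h2 : ¬ Even (k+2) := by
        rw [Nat.even_add_one]; simpa using he1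
      rw [if_neg h1, if_pos he1, if_neg h2]
      simp only [← hd, ek3, ek2', ek2]
      module

end Stage5

section Stage6

open CoxeterSystem

variable {S : Type*} {M : CoxeterMatrix S} {W : Type*} [Group W] (cs : CoxeterSystem M W)

lemma fs_nonneg {i j : S} (hij : i ≠ j) {k : ℕ} (hk : M i j = 0 ∨ k ≤ M i j) :
    0 ≤ fs (-kf M i j) k := by
  by_cases h0 : M i j = 0
  · have hd : -kf M i j = 1 := by simp [kf, h0]
    rw [hd, fs_nat]
    positivity
  · have hk' : k ≤ M i j := by tauto
    have h2 : 2 ≤ M i j := by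
      have := M.off_diagonal i j hij
      omega
    rw [d_cos h2]
    have hsin := fs_sin (Real.pi / (M i j)) k
    have hm : (0:ℝ) < (M i j : ℝ) := by
      have : 0 < M i j := by omega
      exact_mod_cast this
    have hknn : (0:ℝ) ≤ (k:ℝ) * (Real.pi / (M i j)) := by positivity
    have hkpi : (k:ℝ) * (Real.pi / (M i j)) ≤ Real.pi := by
      have hcast : (k:ℝ) ≤ (M i j : ℝ) := by exact_mod_cast hk'
      rw [div_eq_mul_inv]
      have := Real.pi_pos
      rw [show (k:ℝ) * (Real.pi * ((M i j : ℝ))⁻¹) = ((k:ℝ) / (M i j)) * Real.pi by ring]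
      have : (k:ℝ) / (M i j) ≤ 1 := by
        rw [div_le_one hm]; exact hcast
      nlinarith
    have hs0 := Real.sin_nonneg_of_nonneg_of_le_pi hknn hkpi
    have hst := sin_theta_pos h2
    nlinarith

theorem pos_main : ∀ n (w : W) (i : S), cs.length w = n → ¬cs.IsRightDescent w i →
    Pos (sgm cs w (al i)) := by
  intro n
  induction n using Nat.strong_induction_on with
  | _ n IH =>
  intro w i hlen hnd
  -- The "negative" corollary, available at all lengths ≤ n.
  have hC : ∀ w' : W, ∀ i' c : S, cs.length w' ≤ n → cs.IsRightDescent w' i' →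
      (sgm cs w' (al i')) c ≤ 0 := by
    intro w' i' c hw' hdesc
    have h1 : cs.length (w' * cs.simple i') < n := lt_of_lt_of_le hdesc hw'
    have h2 : ¬ cs.IsRightDescent (w' * cs.simple i') i' :=
      (cs.isRightDescent_iff_not_isRightDescent_mul).mp hdesc
    have hp := IH _ h1 (w' * cs.simple i') i' rfl h2
    have e : sgm cs w' (al i') = -(sgm cs (w' * cs.simple i') (al i')) := by
      conv_lhs => rw [show w' = (w' * cs.simple i') * cs.simple i' by
        rw [cs.simple_mul_simple_cancel_right]]
      rw [sgm_mul_apply, sgm_simple, rf_al_self, map_neg]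
    rw [e]
    have := hp c
    simp only [Finsupp.neg_apply]
    linarith
  by_cases hw1 : w = 1
  · rw [hw1, map_one]
    exact Pos_al i
  obtain ⟨j, hdj⟩ := cs.exists_rightDescent_of_ne_one hw1
  have hij : i ≠ j := by rintro rfl; exact hnd hdj
  set Wp := Subgroup.closure {cs.simple i, cs.simple j} with hWp
  -- Every right descent of an element of the dihedral subgroup is i or j.
  have hdescpair : ∀ x ∈ Wp, cs.length x ≤ n → ∀ c, cs.IsRightDescent x c →
      (c = i ∨ c = j) := by
    intro x hx hlx c hdc
    by_contra hcon
    push_neg at hcon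
    obtain ⟨hci, hcj⟩ := hcon
    have h0 := hC x c c hlx hdc
    have hplane := sgm_sub_mem_plane cs x hx (al c)
    have hcc : (sgm cs x (al c) - al c) c = 0 := Pl_coord hplane hci hcj
    rw [Finsupp.sub_apply] at hcc
    rw [al_apply_self] at hcc
    linarith
  -- Peeling: dihedral elements are alternating words.
  have hpeel : ∀ q, ∀ x, x ∈ Wp → cs.length x = q → q ≤ n →
      ∃ k, cs.length x = k ∧ (x = Zel cs i j k ∨ x = Zel cs j i k) := by
    intro q
    induction q using Nat.strong_induction_on with
    | _ q IHq =>
    intro x hx hlx hqn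
    by_cases hx1 : x = 1
    · exact ⟨0, by rw [hx1, cs.length_one], Or.inl (by rw [hx1, Zel_zero])⟩
    obtain ⟨c, hdc⟩ := cs.exists_rightDescent_of_ne_one hx1
    have hcij := hdescpair x hx (by omega) c hdc
    have hlen' : cs.length (x * cs.simple c) + 1 = cs.length x := cs.isRightDescent_iff.mp hdc
    have hx'W : x * cs.simple c ∈ Wp := by
      apply Subgroup.mul_mem _ hx
      apply Subgroup.subset_closure
      rcases hcij with rfl | rfl
      · exact Set.mem_insert _ _
      · exact Set.mem_insert_of_mem _ rfl
    obtain ⟨k', hk'len, hk'or⟩ := IHq (cs.length (x * cs.simple c)) (by omega)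
      (x * cs.simple c) hx'W rfl (by omega)
    have hxeq : x = (x * cs.simple c) * cs.simple c := by
      rw [cs.simple_mul_simple_cancel_right]
    rcases hk'or with hz | hz
    · rcases hcij with hc | hc
      · -- x' = Zel i j k', c = i : x = Zel j i (k'+1)
        refine ⟨k'+1, by omega, Or.inr ?_⟩
        rw [hxeq, hz, hc, ← Zel_succ cs j i k']
      · -- x' = Zel i j k', c = j
        rcases Nat.eq_zero_or_pos k' with rfl | hk'pos
        · refine ⟨1, by omega, Or.inl ?_⟩
          rw [hxeq, hz, hc, Zel_zero, one_mul, Zel_one]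
        · exfalso
          have hzz : Zel cs i j k' = Zel cs j i (k'-1) * cs.simple j := by
            conv_lhs => rw [show k' = (k'-1)+1 by omega]
            rw [Zel_succ cs i j (k'-1)]
          have hxx : x = Zel cs j i (k'-1) := by
            rw [hxeq, hz, hc, hzz, cs.simple_mul_simple_cancel_right]
          have := Zel_length_le cs j i (k'-1)
          rw [← hxx] at this
          omega
    · rcases hcij with hc | hc
      · -- x' = Zel j i k', c = i
        rcases Nat.eq_zero_or_pos k' with rfl | hk'pos
        · refine ⟨1, by omega, Or.inr ?_⟩
          rw [hxeq, hz, hc, Zel_zero, one_mul, Zel_one]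
        · exfalso
          have hzz : Zel cs j i k' = Zel cs i j (k'-1) * cs.simple i := by
            conv_lhs => rw [show k' = (k'-1)+1 by omega]
            rw [Zel_succ cs j i (k'-1)]
          have hxx : x = Zel cs i j (k'-1) := by
            rw [hxeq, hz, hc, hzz, cs.simple_mul_simple_cancel_right]
          have := Zel_length_le cs i j (k'-1)
          rw [← hxx] at this
          omega
      · -- x' = Zel j i k', c = j : x = Zel i j (k'+1)
        refine ⟨k'+1, by omega, Or.inl ?_⟩
        rw [hxeq, hz, hc, ← Zel_succ cs i j k']
  -- The pure dihedral case.
  have hdihedral : ∀ x, x ∈ Wp → cs.length x ≤ n → ¬cs.IsRightDescent x i →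
      Pos (sgm cs x (al i)) := by
    intro x hx hlx hndxi
    obtain ⟨k, hkx, hor⟩ := hpeel (cs.length x) x hx rfl hlx
    rcases hor with hxz | hxz
    · -- x = Zel i j k (ends in j)
      have hkle : M i j = 0 ∨ k ≤ M i j := by
        rcases Nat.eq_zero_or_pos (M i j) with h0 | hpos
        · exact Or.inl h0
        right
        by_contra hgt
        push_neg at hgt
        have hnr := cs.not_isReduced_alternatingWord i j (by omega) hgt
        rw [CoxeterSystem.IsReduced] at hnr
        rw [length_alternatingWord] at hnr
        rw [← Zel, ← hxz] at hnr
        omega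
      have hklt : M i j = 0 ∨ k < M i j := by
        rcases Nat.eq_zero_or_pos (M i j) with h0 | hpos
        · exact Or.inl h0
        right
        rcases hkle with h0 | hle
        · omega
        rcases Nat.lt_or_ge k (M i j) with h | h
        · exact h
        exfalso
        have hkm : k = M i j := by omega
        have hm1 : 1 ≤ M i j := by omega
        have hsucc : Zel cs j i (M i j) = Zel cs i j (M i j - 1) * cs.simple i := by
          conv_lhs => rw [show M i j = (M i j - 1) + 1 by omega]
          rw [Zel_succ cs j i]
        have hthis : x = Zel cs i j (M i j - 1) * cs.simple i := by
          rw [hxz, hkm, Zel_braid, hsucc]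
        apply hndxi
        rw [CoxeterSystem.IsRightDescent, hthis, cs.simple_mul_simple_cancel_right]
        calc cs.length (Zel cs i j (M i j - 1)) ≤ M i j - 1 := Zel_length_le cs i j _
        _ < cs.length (Zel cs i j (M i j - 1) * cs.simple i) := by
            rw [← hthis, hkx]; omega
      have hk1le : M i j = 0 ∨ k + 1 ≤ M i j := by
        rcases hklt with h0 | h
        · exact Or.inl h0
        · exact Or.inr (by omega)
      have hkle' : M i j = 0 ∨ k ≤ M i j := by
        rcases hklt with h0 | h
        · exact Or.inl h0
        · exact Or.inr (by omega)
      rw [hxz, sgm_Zel_al cs k hij]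
      have p1 := fs_nonneg hij hk1le
      have p2 := fs_nonneg hij hkle'
      split_ifs
      · exact Pos.add (Pos.smul p1 (Pos_al i)) (Pos.smul p2 (Pos_al j))
      · exact Pos.add (Pos.smul p2 (Pos_al i)) (Pos.smul p1 (Pos_al j))
    · -- x = Zel j i k (ends in i)
      rcases Nat.eq_zero_or_pos k with rfl | hkpos
      · rw [hxz, Zel_zero, map_one]
        exact Pos_al i
      exfalso
      have hsucc : Zel cs j i k = Zel cs i j (k - 1) * cs.simple i := by
        conv_lhs => rw [show k = (k-1)+1 by omega]
        rw [Zel_succ cs j i]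
      have hthis : x = Zel cs i j (k - 1) * cs.simple i := by
        rw [hxz, hsucc]
      apply hndxi
      rw [CoxeterSystem.IsRightDescent, hthis, cs.simple_mul_simple_cancel_right]
      calc cs.length (Zel cs i j (k - 1)) ≤ k - 1 := Zel_length_le cs i j _
      _ < cs.length (Zel cs i j (k - 1) * cs.simple i) := by
          rw [← hthis, hkx]; omega
  -- Maximal dihedral decomposition.
  set Pq : ℕ → Prop := fun q => ∃ x, x ∈ Wp ∧ cs.length x = q ∧
    cs.length (w * x⁻¹) + q = cs.length w with hPq
  have hlw1 : 1 ≤ cs.length w := by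
    rcases Nat.eq_zero_or_pos (cs.length w) with h0 | h
    · exact absurd (cs.length_eq_zero_iff.mp h0) hw1
    · exact h
  have hP1 : Pq 1 := by
    refine ⟨cs.simple j, Subgroup.subset_closure (Set.mem_insert_of_mem _ rfl),
      cs.length_simple j, ?_⟩
    rw [cs.inv_simple]
    exact cs.isRightDescent_iff.mp hdj
  set q0 := Nat.findGreatest Pq (cs.length w) with hq0
  have hq0ge : 1 ≤ q0 := Nat.le_findGreatest hlw1 hP1
  have hq0le : q0 ≤ cs.length w := Nat.findGreatest_le _
  have hPq0 : Pq q0 := Nat.findGreatest_spec hlw1 hP1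
  obtain ⟨x, hxW, hxlen, hadd⟩ := hPq0
  set u := w * x⁻¹ with hu
  have hw_ux : w = u * x := by rw [hu]; group
  have hxne1 : x ≠ 1 := by
    intro h
    rw [h, cs.length_one] at hxlen
    omega
  have hndu : ∀ c : S, (c = i ∨ c = j) → ¬ cs.IsRightDescent u c := by
    intro c hc hdesc
    have h1 : cs.length (u * cs.simple c) + 1 = cs.length u := cs.isRightDescent_iff.mp hdesc
    set x2 := cs.simple c * x with hx2
    have hx2W : x2 ∈ Wp := by
      apply Subgroup.mul_mem _ _ hxW
      apply Subgroup.subset_closure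
      rcases hc with rfl | rfl
      · exact Set.mem_insert _ _
      · exact Set.mem_insert_of_mem _ rfl
    have hly : cs.length x2 ≤ cs.length x + 1 := by
      have h := cs.length_mul_le (cs.simple c) x
      rw [cs.length_simple] at h
      rw [hx2]
      omega
    have hwx2 : w * x2⁻¹ = u * cs.simple c := by
      rw [hw_ux, hx2]
      simp [mul_assoc]
    have htri : cs.length w ≤ cs.length (u * cs.simple c) + cs.length x2 := by
      have he : w = (u * cs.simple c) * x2 := by
        rw [hx2]
        rw [hw_ux]
        simp [mul_assoc]
      rw [he]
      exact cs.length_mul_le _ _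
    have hx2len : cs.length x2 = q0 + 1 := by omega
    have hPnew : Pq (q0 + 1) := ⟨x2, hx2W, hx2len, by rw [hwx2]; omega⟩
    have : q0 + 1 ≤ cs.length w := by omega
    exact Nat.findGreatest_is_greatest (by omega) this hPnew
  have hndx : ¬ cs.IsRightDescent x i := by
    intro hdesc
    have h1 : cs.length (x * cs.simple i) + 1 = cs.length x := cs.isRightDescent_iff.mp hdesc
    have htri : cs.length (w * cs.simple i) ≤ cs.length u + cs.length (x * cs.simple i) := by
      have he : w * cs.simple i = u * (x * cs.simple i) := by rw [hw_ux, mul_assoc]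
      rw [he]
      exact cs.length_mul_le _ _
    apply hnd
    rw [CoxeterSystem.IsRightDescent]
    omega
  by_cases hu1 : u = 1
  · have hwx : w = x := by rw [hw_ux, hu1, one_mul]
    rw [hwx]
    exact hdihedral x hxW (by rw [← hwx, hlen]) (hwx ▸ hnd)
  · have hune : 1 ≤ cs.length u := by
      rcases Nat.eq_zero_or_pos (cs.length u) with h0 | h
      · exact absurd (cs.length_eq_zero_iff.mp h0) hu1
      · exact h
    have hlu : cs.length u < n := by omega
    have hlx : cs.length x < n := by omega
    have hpx := IH _ hlx x i rfl hndx
    have hmem : sgm cs x (al i) ∈ Pl i j := sgm_mem_plane cs hxW (al_mem_Pl_left i j)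
    have hrepr := Pl_repr hij hmem
    have e : sgm cs w (al i) = ((sgm cs x (al i)) i) • sgm cs u (al i) +
        ((sgm cs x (al i)) j) • sgm cs u (al j) := by
      rw [hw_ux, sgm_mul_apply]
      conv_lhs => rw [hrepr]
      rw [map_add, map_smul, map_smul]
    rw [e]
    exact Pos.add (Pos.smul (hpx i) (IH _ hlu u i rfl (hndu i (Or.inl rfl))))
      (Pos.smul (hpx j) (IH _ hlu u j rfl (hndu j (Or.inr rfl))))

end Stage6

section Stage7

open CoxeterSystem

variable {S : Type*} {M : CoxeterMatrix S} {W : Type*} [Group W] (cs : CoxeterSystem M W)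

lemma pos_of_not_descent {w : W} {i : S} (h : ¬ cs.IsRightDescent w i) :
    Pos (sgm cs w (al i)) :=
  pos_main cs (cs.length w) w i rfl h

lemma neg_of_descent {w : W} {i : S} (h : cs.IsRightDescent w i) (c : S) :
    (sgm cs w (al i)) c ≤ 0 := by
  have h2 : ¬ cs.IsRightDescent (w * cs.simple i) i :=
    (cs.isRightDescent_iff_not_isRightDescent_mul).mp h
  have hp := pos_of_not_descent cs h2 c
  have e : sgm cs w (al i) = -(sgm cs (w * cs.simple i) (al i)) := by
    conv_lhs => rw [show w = (w * cs.simple i) * cs.simple i by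
      rw [cs.simple_mul_simple_cancel_right]]
    rw [sgm_mul_apply, sgm_simple, rf_al_self, map_neg]
  rw [e, Finsupp.neg_apply]
  linarith

lemma sgm_eq_one {w : W} (h : sgm cs w = 1) : w = 1 := by
  by_contra hw
  obtain ⟨c, hc⟩ := cs.exists_rightDescent_of_ne_one hw
  have h1 := neg_of_descent cs hc c
  rw [h] at h1
  have he : ((1 : V S ≃ₗ[ℝ] V S) (al c)) c = 1 := by
    show (al c) c = 1
    exact al_apply_self c
  rw [he] at h1
  linarith

/-- If two reflections have parallel roots, they are equal. -/
lemma refl_eq_of_parallel (w : W) (c : S) (w' : W) (c' : S) {r : ℝ}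
    (h : rt cs w' c' = r • rt cs w c) :
    w' * cs.simple c' * w'⁻¹ = w * cs.simple c * w⁻¹ := by
  set t := w * cs.simple c * w⁻¹ with ht
  set t' := w' * cs.simple c' * w'⁻¹ with ht'
  set β := rt cs w c with hβ
  have hr2 : r * r = 1 := by
    have h1 := BF_rt_rt cs w' c'
    rw [h] at h1
    simp only [map_smul, LinearMap.smul_apply, smul_eq_mul] at h1
    have h2 := BF_rt_rt cs w c
    rw [← hβ] at h2
    rw [h2, mul_one] at h1
    exact h1
  have hmapeq : sgm cs t' = sgm cs t := by
    apply LinearEquiv.toLinearMap_injective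
    apply LinearMap.ext
    intro v
    have e1 : sgm cs t' v = v - (2 * BF M v (r • β)) • (r • β) := by
      rw [ht']; rw [sgm_reflection cs w' c' v, h]
    have e2 : sgm cs t v = v - (2 * BF M v β) • β := by
      rw [ht]; exact sgm_reflection cs w c v
    show sgm cs t' v = sgm cs t v
    rw [e1, e2]
    congr 1
    rw [map_smul, smul_eq_mul, smul_smul]
    congr 1
    linear_combination (2 * BF M v β) * hr2
  have ht2 : t * t = 1 := by
    have : cs.IsReflection t := ⟨w, c, rfl⟩
    exact this.mul_self
  have hcomp : sgm cs (t' * t) = 1 := by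
    rw [map_mul, hmapeq, ← map_mul, ht2, map_one]
  have h1 : t' * t = 1 := sgm_eq_one cs hcomp
  have htinv : t⁻¹ = t := by
    have : cs.IsReflection t := ⟨w, c, rfl⟩
    exact this.inv
  rw [← htinv]
  exact eq_inv_of_mul_eq_one_left h1

/-- The span of the simple roots indexed by `I`. -/
def UI (I : Set S) : Submodule ℝ (V S) := Submodule.span ℝ (al '' I)

lemma al_mem_UI {I : Set S} {i : S} (h : i ∈ I) : al i ∈ UI I :=
  Submodule.subset_span ⟨i, h, rfl⟩

lemma UI_coord {I : Set S} {v : V S} (hv : v ∈ UI I) {c : S} (hc : c ∉ I) : v c = 0 := by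
  refine Submodule.span_induction (p := fun x _ => x c = 0) ?_ ?_ ?_ ?_ hv
  · rintro x ⟨i, hi, rfl⟩
    have : c ≠ i := by rintro rfl; exact hc hi
    exact al_apply_ne this
  · simp
  · intro x y _ _ hx hy
    rw [Finsupp.add_apply, hx, hy, add_zero]
  · intro a x _ hx
    rw [Finsupp.smul_apply, hx, smul_zero]

lemma sgm_sub_mem_UI (I : Set S) :
    ∀ x ∈ Subgroup.closure (cs.simple '' I), ∀ v : V S, sgm cs x v - v ∈ UI I := by
  intro x hx
  refine Subgroup.closure_induction (p := fun g _ => ∀ v : V S, sgm cs g v - v ∈ UI I)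
    ?_ ?_ ?_ ?_ hx
  · rintro y ⟨i, hi, rfl⟩ v
    rw [sgm_simple, rf_apply]
    have e : v - (2 * BF M v (al i)) • al i - v = -((2 * BF M v (al i)) • al i) := by abel
    rw [e]
    exact Submodule.neg_mem _ (Submodule.smul_mem _ _ (al_mem_UI hi))
  · intro v; simp
  · intro x y _ _ px py v
    have e : sgm cs (x*y) v - v = (sgm cs x (sgm cs y v) - sgm cs y v) + (sgm cs y v - v) := by
      rw [sgm_mul_apply]; abel
    rw [e]
    exact Submodule.add_mem _ (px _) (py _)
  · intro x _ px v
    have e : sgm cs x⁻¹ v - v = -(sgm cs x (sgm cs x⁻¹ v) - sgm cs x⁻¹ v) := by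
      rw [sgm_inv_apply']; abel
    rw [e]
    exact Submodule.neg_mem _ (px _)

lemma root_mem_UI {I : Set S} {x : W} (hx : x ∈ Subgroup.closure (cs.simple '' I))
    {w : W} {c : S} (hexp : x = w * cs.simple c * w⁻¹) : rt cs w c ∈ UI I := by
  have h := sgm_sub_mem_UI cs I x hx (rt cs w c)
  rw [hexp, sgm_reflection cs w c, BF_rt_rt] at h
  have h2 : (-2 : ℝ) • rt cs w c ∈ UI I := by
    convert h using 1
    module
  have h3 := Submodule.smul_mem (UI I) (-(1:ℝ)/2) h2
  convert h3 using 1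
  module

/-- Kilmoyer-type theorem: a reflection whose root lies in the span of the
simple roots of `I` belongs to the standard parabolic subgroup `W_I`. -/
theorem kilmoyer (I : Set S) : ∀ n (w : W) (c : S), cs.length (w * cs.simple c * w⁻¹) = n →
    rt cs w c ∈ UI I → w * cs.simple c * w⁻¹ ∈ Subgroup.closure (cs.simple '' I) := by
  intro n
  induction n using Nat.strong_induction_on with
  | _ n IH =>
  intro w c hlen hroot
  set t := w * cs.simple c * w⁻¹ with ht
  have htrefl : cs.IsReflection t := ⟨w, c, rfl⟩
  have ht2 : t * t = 1 := htrefl.mul_self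
  have htinv : t⁻¹ = t := htrefl.inv
  have htne : t ≠ 1 := by
    have hodd := htrefl.odd_length
    intro h1
    rw [h1, cs.length_one] at hodd
    simp [Nat.odd_iff] at hodd
  obtain ⟨c', hdc'⟩ := cs.exists_rightDescent_of_ne_one htne
  have hform : sgm cs t (al c') =
      al c' - (2 * BF M (al c') (rt cs w c)) • rt cs w c := by
    rw [ht]; exact sgm_reflection cs w c (al c')
  have hc'I : c' ∈ I := by
    by_contra hc'
    have hβ : rt cs w c c' = 0 := UI_coord hroot hc'
    have hneg := neg_of_descent cs hdc' c'
    rw [hform] at hneg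
    rw [Finsupp.sub_apply, Finsupp.smul_apply, al_apply_self, hβ] at hneg
    simp at hneg
    linarith
  by_cases htc : t = cs.simple c'
  · rw [htc]
    exact Subgroup.subset_closure ⟨c', hc'I, rfl⟩
  have hldrop : cs.length (cs.simple c' * t) + 1 = cs.length t := by
    have h1 : cs.length (t * cs.simple c') + 1 = cs.length t := cs.isRightDescent_iff.mp hdc'
    have h2 : cs.length (cs.simple c' * t) = cs.length (t * cs.simple c') := by
      rw [← cs.length_inv (cs.simple c' * t), mul_inv_rev, htinv, cs.inv_simple]
    omega
  set t' := cs.simple c' * t * cs.simple c' with ht'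
  have hlt' : cs.length t' ≤ cs.length t := by
    have h3 := cs.length_mul_le (cs.simple c' * t) (cs.simple c')
    rw [cs.length_simple] at h3
    rw [← ht'] at h3
    omega
  have hstrict : cs.length t' < cs.length t := by
    rcases Nat.lt_or_ge (cs.length t') (cs.length t) with h | h
    · exact h
    exfalso
    have heq : cs.length t' = cs.length t := by omega
    have hy : ¬ cs.IsRightDescent (cs.simple c' * t) c' := by
      intro hd
      have h4 := cs.isRightDescent_iff.mp hd
      rw [← ht'] at h4
      omega
    have hposy := pos_of_not_descent cs hy
    set γ := sgm cs t (al c') with hγ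
    have hγneg : ∀ a, γ a ≤ 0 := fun a => neg_of_descent cs hdc' a
    have hys : ∀ a, a ≠ c' → γ a = 0 := by
      intro a ha
      have h5 := hposy a
      have h6 : (sgm cs (cs.simple c' * t) (al c')) a = γ a := by
        rw [sgm_mul_apply, sgm_simple, rf_apply, ← hγ]
        rw [Finsupp.sub_apply, Finsupp.smul_apply, al_apply_ne ha]
        simp
      rw [h6] at h5
      have := hγneg a
      linarith
    have hγform : γ = (γ c') • al c' := by
      ext a
      rcases eq_or_ne a c' with rfl | ha
      · rw [Finsupp.smul_apply, al_apply_self]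
        simp
      · rw [hys a ha, Finsupp.smul_apply, al_apply_ne ha]
        simp
    have hinvol : sgm cs t γ = al c' := by
      rw [hγ, ← sgm_mul_apply, ht2, map_one]
      rfl
    have hg2 : (γ c') * (γ c') = 1 := by
      have h7 : sgm cs t γ = (γ c') • γ := by
        conv_lhs => rw [hγform]
        rw [map_smul, ← hγ]
      rw [hinvol, hγform, smul_smul] at h7
      have h8 := congrArg (fun v : V S => v c') h7
      simp only [Finsupp.smul_apply, al_apply_self, smul_eq_mul, mul_one] at h8
      linarith [h8]
    have hgm1 : γ c' = -1 := by
      have := hγneg c'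
      nlinarith
    have hγeq : γ = -al c' := by
      rw [hγform, hgm1]
      module
    rw [hform] at hγeq
    set β := rt cs w c with hβ
    set rr := BF M (al c') β with hrr
    have hαβ : rt cs (1 : W) c' = rr • β := by
      have h9 : rt cs (1 : W) c' = al c' := by rw [rt, map_one]; rfl
      rw [h9]
      have h10 : (2:ℝ) • al c' = (2 * rr) • β := by
        have h11 : al c' - (2 * rr) • β = -al c' := hγeq
        linear_combination (norm := module) h11
      have h13 : (2:ℝ) • al c' = (2:ℝ) • (rr • β) := by
        rw [h10, smul_smul]
      exact smul_right_injective (V S) (two_ne_zero (α := ℝ)) h13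
    have h14 := refl_eq_of_parallel cs w c (1 : W) c' hαβ
    rw [one_mul, inv_one, mul_one] at h14
    exact htc h14.symm
  have hexp' : t' = (cs.simple c' * w) * cs.simple c * (cs.simple c' * w)⁻¹ := by
    rw [ht', ht, mul_inv_rev, cs.inv_simple]
    simp [mul_assoc]
  have hroot' : rt cs (cs.simple c' * w) c ∈ UI I := by
    have e : rt cs (cs.simple c' * w) c = sgm cs (cs.simple c') (rt cs w c) := by
      rw [rt, rt, sgm_mul_apply]
    rw [e, sgm_simple, rf_apply]
    exact Submodule.sub_mem _ hroot (Submodule.smul_mem _ _ (al_mem_UI hc'I))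
  have hlen' : cs.length ((cs.simple c' * w) * cs.simple c * (cs.simple c' * w)⁻¹) =
      cs.length t' := by rw [← hexp']
  have hrec := IH (cs.length t') (by omega) (cs.simple c' * w) c hlen' hroot'
  rw [← hexp'] at hrec
  have hfin : t = cs.simple c' * t' * cs.simple c' := by
    rw [ht']
    simp [mul_assoc]
  rw [hfin]
  exact Subgroup.mul_mem _ (Subgroup.mul_mem _ (Subgroup.subset_closure ⟨c', hc'I, rfl⟩) hrec)
    (Subgroup.subset_closure ⟨c', hc'I, rfl⟩)

end Stage7

section Stage8

open CoxeterSystem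

variable {S : Type*} {M : CoxeterMatrix S} {W : Type*} [Group W] (cs : CoxeterSystem M W)

lemma rt_conj (z w : W) (c : S) : rt cs (z * w) c = sgm cs z (rt cs w c) := by
  rw [rt, rt, sgm_mul_apply]

/-- If a reflection `w * s c * w⁻¹` lies in `z W_J z⁻¹`, then `σ(z⁻¹)` of its root lies
in the span of the simple roots of `J`. -/
lemma root_of_mem_conj_parabolic {J : Set S} {z w : W} {c : S}
    (h : ∃ g ∈ Subgroup.closure (cs.simple '' J), z * g * z⁻¹ = w * cs.simple c * w⁻¹) :
    sgm cs z⁻¹ (rt cs w c) ∈ UI J := by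
  obtain ⟨g, hg, hgz⟩ := h
  have hexp : g = (z⁻¹ * w) * cs.simple c * (z⁻¹ * w)⁻¹ := by
    have : g = z⁻¹ * (w * cs.simple c * w⁻¹) * z := by
      rw [← hgz]; group
    rw [this]; group
  have := root_mem_UI cs hg hexp
  rwa [rt_conj] at this

/-- Converse: if `σ(z⁻¹)` of the root lies in the span of the simple roots of `J`, then
the reflection lies in `z W_J z⁻¹`. -/
lemma mem_conj_parabolic_of_root {J : Set S} {z w : W} {c : S}
    (h : sgm cs z⁻¹ (rt cs w c) ∈ UI J) :
    ∃ g ∈ Subgroup.closure (cs.simple '' J), z * g * z⁻¹ = w * cs.simple c * w⁻¹ := by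
  have hroot : rt cs (z⁻¹ * w) c ∈ UI J := by rwa [rt_conj]
  have hmem := kilmoyer cs J (cs.length ((z⁻¹ * w) * cs.simple c * (z⁻¹ * w)⁻¹))
    (z⁻¹ * w) c rfl hroot
  refine ⟨(z⁻¹ * w) * cs.simple c * (z⁻¹ * w)⁻¹, hmem, ?_⟩
  group

lemma UI_pair_repr {a b : S} (hab : a ≠ b) {v : V S} (hv : v ∈ UI {a, b}) :
    v = (v a) • al a + (v b) • al b := by
  have himg : al '' ({a, b} : Set S) = {al a, al b} := by
    rw [Set.image_insert_eq, Set.image_singleton]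
  rw [UI, himg] at hv
  exact Pl_repr hab hv

lemma UI_pair_mem {a b : S} (p q : ℝ) : p • al a + q • al b ∈ UI ({a, b} : Set S) :=
  Submodule.add_mem _ (Submodule.smul_mem _ _ (al_mem_UI (by simp)))
    (Submodule.smul_mem _ _ (al_mem_UI (by simp)))

end Stage8

section Final

open CoxeterSystem

variable {S : Type*} {M : CoxeterMatrix S} {W : Type*} [Group W]

lemma WP_eq (cs : CoxeterSystem M W) (I : Set S) :
    WP cs I = Subgroup.closure (cs.simple '' I) := rfl

lemma mem_conj_WP_iff (cs : CoxeterSystem M W) (J : Set S) (z : W) (t : W) :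
    t ∈ ((WP cs J).map (MulAut.conj z).toMonoidHom : Subgroup W) ↔
      ∃ g ∈ Subgroup.closure (cs.simple '' J), z * g * z⁻¹ = t := by
  rw [Subgroup.mem_map]
  constructor
  · rintro ⟨g, hg, hgz⟩
    refine ⟨g, hg, ?_⟩
    rw [← hgz]
    simp [MulAut.conj_apply]
  · rintro ⟨g, hg, hgz⟩
    refine ⟨g, hg, ?_⟩
    rw [← hgz]
    simp [MulAut.conj_apply]

theorem refl_inter_parabolic_dihedral' (cs : CoxeterSystem M W) (Q : Subgroup W)
    (hQ : IsParabolic cs Q) (v : W) (K : Set S) (hK : K.ncard = 2)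
    (D : Subgroup W) (hD : D = (WP cs K).map (MulAut.conj v).toMonoidHom) :
    Refl cs ∩ ↑Q ∩ ↑D = ∅ ∨ (∃ t : W, Refl cs ∩ ↑Q ∩ ↑D = {t}) ∨
      Refl cs ∩ ↑Q ∩ ↑D = Refl cs ∩ ↑D := by
  obtain ⟨u, I, hQeq⟩ := hQ
  obtain ⟨a, b, hab, hKab⟩ := Set.ncard_eq_two.mp hK
  rw [hKab] at hD
  by_cases hE : Refl cs ∩ ↑Q ∩ ↑D = ∅
  · exact Or.inl hE
  rw [← ne_eq, ← Set.nonempty_iff_ne_empty] at hE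
  obtain ⟨t1, ht1⟩ := hE
  by_cases hsing : ∀ t ∈ Refl cs ∩ ↑Q ∩ ↑D, t = t1
  · exact Or.inr (Or.inl ⟨t1, Set.eq_singleton_iff_unique_mem.mpr ⟨ht1, hsing⟩⟩)
  push_neg at hsing
  obtain ⟨t2, ht2, ht2ne⟩ := hsing
  refine Or.inr (Or.inr (Set.Subset.antisymm (fun t ht => ⟨ht.1.1, ht.2⟩) ?_))
  rintro t ⟨htR, htD⟩
  refine ⟨⟨htR, ?_⟩, htD⟩
  -- expressions of the three reflections
  obtain ⟨w1, c1, hexp1⟩ := ht1.1.1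
  obtain ⟨w2, c2, hexp2⟩ := ht2.1.1
  obtain ⟨w0, c0, hexp0⟩ := htR
  -- roots in the K-plane
  have hDroot : ∀ (t' w' : W) (c' : S), t' ∈ (D : Set W) → t' = w' * cs.simple c' * w'⁻¹ →
      sgm cs v⁻¹ (rt cs w' c') ∈ UI ({a, b} : Set S) := by
    intro t' w' c' htD' hexp
    apply root_of_mem_conj_parabolic cs
    rw [SetLike.mem_coe, hD, mem_conj_WP_iff] at htD'
    obtain ⟨g, hg, hgv⟩ := htD'
    exact ⟨g, hg, by rw [hgv, hexp]⟩
  have hQroot : ∀ (t' w' : W) (c' : S), t' ∈ (Q : Set W) → t' = w' * cs.simple c' * w'⁻¹ →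
      sgm cs u⁻¹ (rt cs w' c') ∈ UI I := by
    intro t' w' c' htQ' hexp
    apply root_of_mem_conj_parabolic cs
    rw [SetLike.mem_coe, hQeq, mem_conj_WP_iff] at htQ'
    obtain ⟨g, hg, hgv⟩ := htQ'
    exact ⟨g, hg, by rw [hgv, hexp]⟩
  have hβ1 := hDroot t1 w1 c1 ht1.2 hexp1
  have hβ2 := hDroot t2 w2 c2 ht2.2 hexp2
  have hβt := hDroot t w0 c0 htD hexp0
  have hδ1 := hQroot t1 w1 c1 ht1.1.2 hexp1
  have hδ2 := hQroot t2 w2 c2 ht2.1.2 hexp2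
  set γ1 := sgm cs v⁻¹ (rt cs w1 c1) with hγ1
  set γ2 := sgm cs v⁻¹ (rt cs w2 c2) with hγ2
  set γt := sgm cs v⁻¹ (rt cs w0 c0) with hγt
  set p1 := γ1 a with hp1
  set q1 := γ1 b with hq1
  set p2 := γ2 a with hp2
  set q2 := γ2 b with hq2
  have hrepr1 := UI_pair_repr hab hβ1
  have hrepr2 := UI_pair_repr hab hβ2
  have hreprt := UI_pair_repr hab hβt
  by_cases hdet : p1 * q2 - q1 * p2 = 0
  · exfalso
    apply ht2ne
    -- the two roots are parallel, so t1 = t2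
    have hγ2ne : γ2 ≠ 0 := by
      intro h
      apply rt_ne_zero cs w2 c2
      have := congrArg (sgm cs v) h
      rw [hγ2, sgm_inv_apply', map_zero] at this
      exact this
    have hne : p2 ≠ 0 ∨ q2 ≠ 0 := by
      by_contra hcon
      push_neg at hcon
      apply hγ2ne
      rw [hrepr2, ← hp2, ← hq2, hcon.1, hcon.2]
      simp
    have hpar : ∃ r : ℝ, γ1 = r • γ2 := by
      rcases hne with hp | hq
      · refine ⟨p1 / p2, ?_⟩
        rw [hrepr1, hrepr2, ← hp1, ← hq1, ← hp2, ← hq2]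
        rw [smul_add, smul_smul, smul_smul]
        have e1 : p1 / p2 * p2 = p1 := by field_simp
        have e2 : p1 / p2 * q2 = q1 := by field_simp; linarith [hdet]
        rw [e1, e2]
      · refine ⟨q1 / q2, ?_⟩
        rw [hrepr1, hrepr2, ← hp1, ← hq1, ← hp2, ← hq2]
        rw [smul_add, smul_smul, smul_smul]
        have e1 : q1 / q2 * q2 = q1 := by field_simp
        have e2 : q1 / q2 * p2 = p1 := by field_simp; linarith [hdet]
        rw [e1, e2]
    obtain ⟨r, hr⟩ := hpar
    have hrtpar : rt cs w1 c1 = r • rt cs w2 c2 := by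
      have h5 := congrArg (sgm cs v) hr
      rw [hγ1, hγ2, sgm_inv_apply', map_smul, sgm_inv_apply'] at h5
      exact h5
    have h6 := refl_eq_of_parallel cs w2 c2 w1 c1 hrtpar
    rw [← hexp1, ← hexp2] at h6
    exact h6.symm
  · -- the two roots span the plane
    set pt := γt a with hpt
    set qt := γt b with hqt
    set Δ := p1 * q2 - q1 * p2 with hΔ
    set x := (pt * q2 - qt * p2) / Δ with hx
    set y := (p1 * qt - q1 * pt) / Δ with hy
    have hcomb : γt = x • γ1 + y • γ2 := by
      rw [hreprt, hrepr1, hrepr2, ← hp1, ← hq1, ← hp2, ← hq2]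
      rw [smul_add, smul_add, smul_smul, smul_smul, smul_smul, smul_smul]
      have e1 : x * p1 + y * p2 = pt := by
        rw [hx, hy]
        field_simp
        ring
      have e2 : x * q1 + y * q2 = qt := by
        rw [hx, hy]
        field_simp
        ring
      rw [← e1, ← e2]
      module
    have hrtcomb : rt cs w0 c0 = x • rt cs w1 c1 + y • rt cs w2 c2 := by
      have h5 := congrArg (sgm cs v) hcomb
      rw [hγt, hγ1, hγ2, sgm_inv_apply', map_add, map_smul, map_smul,
        sgm_inv_apply', sgm_inv_apply'] at h5
      exact h5
    have hδt : sgm cs u⁻¹ (rt cs w0 c0) ∈ UI I := by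
      rw [hrtcomb, map_add, map_smul, map_smul]
      exact Submodule.add_mem _ (Submodule.smul_mem _ _ hδ1) (Submodule.smul_mem _ _ hδ2)
    obtain ⟨g, hg, hgu⟩ := mem_conj_parabolic_of_root cs hδt
    rw [SetLike.mem_coe, hQeq, mem_conj_WP_iff]
    exact ⟨g, hg, by rw [hgu, ← hexp0]⟩

end Final

end

/-- Let `Q` be a parabolic subgroup and `D = v W_K v⁻¹` a dihedral parabolic subgroup
(`|K| = 2`).  Then `T ∩ Q ∩ D` is empty, or a single reflection, or all of `T ∩ D`. -/
theorem refl_inter_parabolic_dihedral (cs : CoxeterSystem M W) (Q : Subgroup W)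
    (hQ : IsParabolic cs Q) (v : W) (K : Set S) (hK : K.ncard = 2)
    (D : Subgroup W) (hD : D = (WP cs K).map (MulAut.conj v).toMonoidHom) :
    Refl cs ∩ ↑Q ∩ ↑D = ∅ ∨ (∃ t : W, Refl cs ∩ ↑Q ∩ ↑D = {t}) ∨
      Refl cs ∩ ↑Q ∩ ↑D = Refl cs ∩ ↑D := by
  exact refl_inter_parabolic_dihedral' cs Q hQ v K hK D hD

end DGM
end

section
/- For every w ∈ W and every I ⊆ S, π_I(w) := w · t_I(w)⁻¹ is the unique element v ∈ W_I such that N(v) = N(w) ∩ T_I. -/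
open scoped Classical

namespace DGM

/-- Auxiliary group for the parity cocycle: pairs (f, u) with
(f,u)(g,v) = (f + g ∘ conj, uv). -/
structure Cx (W : Type*) where
  f : W → ZMod 2
  el : W

namespace Cx

variable {W : Type*} [Group W]

private lemma z2 : ∀ a : ZMod 2, a + a = 0 := by decide

instance : Group (Cx W) where
  mul a b := ⟨fun x => a.f x + b.f (a.el⁻¹ * x * a.el), a.el * b.el⟩
  one := ⟨fun _ => 0, 1⟩
  inv a := ⟨fun x => a.f (a.el * x * a.el⁻¹), a.el⁻¹⟩
  mul_assoc := by
    rintro ⟨f, u⟩ ⟨g, v⟩ ⟨h, t⟩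
    show Cx.mk (fun x => (f x + g (u⁻¹ * x * u)) + h ((u * v)⁻¹ * x * (u * v))) ((u * v) * t)
      = Cx.mk (fun x => f x + (g (u⁻¹ * x * u) + h (v⁻¹ * (u⁻¹ * x * u) * v))) (u * (v * t))
    congr 1
    · funext x
      have hx : (u * v)⁻¹ * x * (u * v) = v⁻¹ * (u⁻¹ * x * u) * v := by group
      rw [hx, add_assoc]
    · rw [mul_assoc]
  one_mul := by
    rintro ⟨f, u⟩
    show Cx.mk (fun x => 0 + f ((1 : W)⁻¹ * x * 1)) (1 * u) = Cx.mk f u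
    congr 1
    · funext x; simp
    · rw [one_mul]
  mul_one := by
    rintro ⟨f, u⟩
    show Cx.mk (fun x => f x + 0) (u * 1) = Cx.mk f u
    congr 1
    · funext x; simp
    · rw [mul_one]
  inv_mul_cancel := by
    rintro ⟨f, u⟩
    show Cx.mk (fun x => f (u * x * u⁻¹) + f ((u⁻¹)⁻¹ * x * u⁻¹)) (u⁻¹ * u) = Cx.mk (fun _ => 0) 1
    congr 1
    · funext x; rw [inv_inv]; exact z2 _
    · rw [inv_mul_cancel]

@[simp] lemma mul_f (a b : Cx W) (x : W) :
    (a * b).f x = a.f x + b.f (a.el⁻¹ * x * a.el) := rfl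

@[simp] lemma mul_el (a b : Cx W) : (a * b).el = a.el * b.el := rfl

@[simp] lemma one_f (x : W) : (1 : Cx W).f x = 0 := rfl

@[simp] lemma one_el : (1 : Cx W).el = 1 := rfl

lemma pow_el (a : Cx W) (m : ℕ) : (a ^ m).el = a.el ^ m := by
  induction m with
  | zero => simp
  | succ k ih => rw [pow_succ, pow_succ, mul_el, ih]

lemma pow_f (a : Cx W) (m : ℕ) (x : W) :
    (a ^ m).f x = ∑ r ∈ Finset.range m, a.f ((a.el ^ r)⁻¹ * x * a.el ^ r) := by
  induction m with
  | zero => simp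
  | succ k ih =>
      rw [pow_succ, mul_f, ih, Finset.sum_range_succ, pow_el]

end Cx

end DGM
namespace DGM

variable {S : Type*} {W : Type*} [Group W] {M : CoxeterMatrix S}

/-- `t_I(w)`: the unique element of minimal length of the coset `W_I w`. -/
noncomputable def tP (cs : CoxeterSystem M W) (I : Set S) (w : W) : W :=
  Classical.epsilon (fun v =>
    (∃ u ∈ WP cs I, v = u * w) ∧
      ∀ v', (∃ u ∈ WP cs I, v' = u * w) → cs.length v ≤ cs.length v')

/-- The left inversion set `N(w) = {t ∈ T : ℓ(tw) < ℓ(w)}`. -/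
def NSet (cs : CoxeterSystem M W) (w : W) : Set W :=
  {t | cs.IsReflection t ∧ cs.length (t * w) < cs.length w}

end DGM
section Part2

namespace DGM

section AbstractLift

variable {W : Type*} [Group W]

private lemma sum_pair (m : ℕ) (F : ℕ → ZMod 2) :
    ∑ r ∈ Finset.range m, (F (2 * r) + F (2 * r + 1)) = ∑ k ∈ Finset.range (2 * m), F k := by
  induction m with
  | zero => simp
  | succ n ih =>
      rw [Finset.sum_range_succ, ih, show 2 * (n + 1) = (2 * n + 1) + 1 by ring,
        Finset.sum_range_succ, Finset.sum_range_succ, add_assoc]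

private lemma cx_liftable (si sj : W) (m : ℕ)
    (hsii : si * si = 1) (hsjj : sj * sj = 1) (hpow : (si * sj) ^ m = 1) :
    ((⟨fun x => if x = si then 1 else 0, si⟩ : Cx W)
      * (⟨fun x => if x = sj then 1 else 0, sj⟩ : Cx W)) ^ m = 1 := by
  have hinv_si : si⁻¹ = si := by
    rw [inv_eq_iff_mul_eq_one, hsii]
  have hinv_sj : sj⁻¹ = sj := by
    rw [inv_eq_iff_mul_eq_one, hsjj]
  set a := si * sj with ha
  have hconj : ∀ k : ℕ, si * a ^ k * si⁻¹ = (a ^ k)⁻¹ := by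
    intro k
    rw [← conj_pow, ← inv_pow]
    congr 1
    rw [ha, hinv_si, mul_inv_rev, hinv_si, hinv_sj, ← mul_assoc, hsii, one_mul]
  have hconj' : ∀ k : ℕ, si * (a ^ k)⁻¹ * si⁻¹ = a ^ k := by
    intro k
    have h := congrArg Inv.inv (hconj k)
    rw [inv_inv, mul_inv_rev, mul_inv_rev, inv_inv, ← mul_assoc] at h
    exact h
  have hswap' : ∀ k : ℕ, si * (a ^ k)⁻¹ = a ^ k * si := by
    intro k
    have h := congrArg (· * si) (hconj' k)
    simpa [mul_assoc] using h
  have key1 : ∀ r : ℕ, a ^ r * si * (a ^ r)⁻¹ = a ^ (2 * r) * si := by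
    intro r
    rw [mul_assoc, hswap', ← mul_assoc, ← pow_add, two_mul]
  have key2 : ∀ r : ℕ, (a ^ r * si) * sj * (a ^ r * si)⁻¹ = a ^ (2 * r + 1) * si := by
    intro r
    rw [mul_inv_rev, hinv_si]
    calc a ^ r * si * sj * (si * (a ^ r)⁻¹)
        = a ^ (r + 1) * (si * (a ^ r)⁻¹) := by rw [pow_succ, ha]; group
      _ = a ^ (r + 1) * (a ^ r * si) := by rw [hswap']
      _ = a ^ (2 * r + 1) * si := by
          rw [← mul_assoc, ← pow_add, show r + 1 + r = 2 * r + 1 by ring]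
  have cond1 : ∀ (u v y : W), (u⁻¹ * y * u = v) ↔ (y = u * v * u⁻¹) := by
    intro u v y
    constructor
    · intro h; rw [← h]; group
    · intro h; rw [h]; group
  set gi : Cx W := ⟨fun x => if x = si then 1 else 0, si⟩ with hgi
  set gj : Cx W := ⟨fun x => if x = sj then 1 else 0, sj⟩ with hgj
  have hel : ((gi * gj) ^ m).el = 1 := by
    rw [Cx.pow_el, Cx.mul_el, hgi, hgj]
    exact hpow
  have hf : ∀ x, ((gi * gj) ^ m).f x = 0 := by
    intro x
    rw [Cx.pow_f]
    have hmulel : (gi * gj).el = a := rfl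
    have hbody : ∀ r : ℕ,
        (gi * gj).f (((gi * gj).el ^ r)⁻¹ * x * (gi * gj).el ^ r)
        = (if x = a ^ (2 * r) * si then (1 : ZMod 2) else 0)
          + (if x = a ^ (2 * r + 1) * si then (1 : ZMod 2) else 0) := by
      intro r
      rw [hmulel, Cx.mul_f]
      show (if (a ^ r)⁻¹ * x * a ^ r = si then (1 : ZMod 2) else 0)
          + (if gi.el⁻¹ * ((a ^ r)⁻¹ * x * a ^ r) * gi.el = sj then (1 : ZMod 2) else 0) = _
      have hgiel : gi.el = si := rfl
      rw [hgiel]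
      congr 1
      · rw [if_congr ((cond1 (a ^ r) si x).trans (by rw [key1 r])) rfl rfl]
      · have heq : si⁻¹ * ((a ^ r)⁻¹ * x * a ^ r) * si = (a ^ r * si)⁻¹ * x * (a ^ r * si) := by
          group
        have htrans : (si⁻¹ * ((a ^ r)⁻¹ * x * a ^ r) * si = sj)
            ↔ ((a ^ r * si)⁻¹ * x * (a ^ r * si) = sj) := by rw [heq]
        rw [if_congr (htrans.trans ((cond1 (a ^ r * si) sj x).trans (by rw [key2 r]))) rfl rfl]
    rw [Finset.sum_congr rfl (fun r _ => hbody r)]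
    let F : ℕ → ZMod 2 := fun k => if x = a ^ k * si then 1 else 0
    show ∑ r ∈ Finset.range m, (F (2 * r) + F (2 * r + 1)) = 0
    rw [sum_pair m F, two_mul, Finset.sum_range_add]
    have hFm : ∀ k, F (m + k) = F k := by
      intro k
      show (if x = a ^ (m + k) * si then (1 : ZMod 2) else 0) = _
      rw [pow_add, hpow, one_mul]
    have h2 : ∑ k ∈ Finset.range m, F (m + k) = ∑ k ∈ Finset.range m, F k :=
      Finset.sum_congr rfl fun k _ => hFm k
    rw [h2, ← Finset.sum_add_distrib]
    exact Finset.sum_eq_zero fun k _ => Cx.z2 _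
  calc (gi * gj) ^ m = ⟨fun x => ((gi * gj) ^ m).f x, ((gi * gj) ^ m).el⟩ := rfl
  _ = ⟨fun _ => 0, 1⟩ := by rw [hel]; exact congrArg (Cx.mk · 1) (funext hf)
  _ = 1 := rfl

end AbstractLift

variable {S : Type*} {W : Type*} [Group W] {M : CoxeterMatrix S}

variable (cs : CoxeterSystem M W)

/-- The generator images for the parity cocycle representation. -/
noncomputable def gFun (i : S) : Cx W := ⟨fun x => if x = cs.simple i then 1 else 0, cs.simple i⟩

@[simp] lemma gFun_f (i : S) (x : W) :
    (gFun cs i).f x = if x = cs.simple i then 1 else 0 := rfl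

@[simp] lemma gFun_el (i : S) : (gFun cs i).el = cs.simple i := rfl

lemma gFun_liftable : M.IsLiftable (gFun cs) :=
  fun i j => cx_liftable (cs.simple i) (cs.simple j) (M i j)
    (cs.simple_mul_simple_self i) (cs.simple_mul_simple_self j)
    (cs.simple_mul_simple_pow i j)

/-- The parity cocycle homomorphism. -/
noncomputable def phiHom : W →* Cx W := cs.lift ⟨gFun cs, gFun_liftable cs⟩

@[simp] lemma phiHom_simple (i : S) : phiHom cs (cs.simple i) = gFun cs i :=
  cs.lift_apply_simple (gFun_liftable cs) i

lemma phiHom_el (w : W) : (phiHom cs w).el = w := by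
  induction w using cs.simple_induction with
  | simple i => rw [phiHom_simple]; rfl
  | one => rw [map_one]; rfl
  | mul u v hu hv => rw [map_mul, Cx.mul_el, hu, hv]

/-- The parity counting function: `nn cs w x` is the parity of the number of times the
reflection `x` occurs in a left inversion sequence of any word for `w`. -/
noncomputable def nn (w : W) : W → ZMod 2 := (phiHom cs w).f

lemma nn_mul (u v x : W) : nn cs (u * v) x = nn cs u x + nn cs v (u⁻¹ * x * u) := by
  unfold nn
  rw [map_mul, Cx.mul_f, phiHom_el]

@[simp] lemma nn_one (x : W) : nn cs 1 x = 0 := by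
  unfold nn
  rw [map_one]
  rfl

lemma nn_simple (i : S) (x : W) : nn cs (cs.simple i) x = if x = cs.simple i then 1 else 0 := by
  unfold nn
  rw [phiHom_simple]
  rfl

lemma nn_inv (u x : W) : nn cs u⁻¹ x = nn cs u (u * x * u⁻¹) := by
  have h0 : nn cs (u * u⁻¹) (u * x * u⁻¹) = 0 := by rw [mul_inv_cancel, nn_one]
  rw [nn_mul] at h0
  have hx : u⁻¹ * (u * x * u⁻¹) * u = x := by group
  rw [hx] at h0
  have : ∀ a b : ZMod 2, a + b = 0 → b = a := by decide
  exact this _ _ h0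

end DGM

end Part2
section Part3

namespace DGM

variable {S : Type*} {W : Type*} [Group W] {M : CoxeterMatrix S}

variable (cs : CoxeterSystem M W)

lemma leftInvSeq_cons (i : S) (ω : List S) :
    cs.leftInvSeq (i :: ω)
      = cs.simple i :: List.map (MulAut.conj (cs.simple i)) (cs.leftInvSeq ω) := rfl

lemma nn_wordProd_count (ω : List S) (x : W) :
    nn cs (cs.wordProd ω) x = (List.count x (cs.leftInvSeq ω) : ZMod 2) := by
  induction ω generalizing x with
  | nil => simp
  | cons i ω ih =>
      rw [cs.wordProd_cons, nn_mul, nn_simple, leftInvSeq_cons, List.count_cons]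
      have hinj : Function.Injective (MulAut.conj (cs.simple i)) :=
        (MulAut.conj (cs.simple i)).injective
      have hx : x = (MulAut.conj (cs.simple i))
          ((cs.simple i)⁻¹ * x * cs.simple i) := by
        rw [MulAut.conj_apply]; group
      have hcount : List.count x (List.map (⇑(MulAut.conj (cs.simple i))) (cs.leftInvSeq ω))
          = List.count ((cs.simple i)⁻¹ * x * cs.simple i) (cs.leftInvSeq ω) := by
        conv_lhs => rw [hx]
        exact List.count_map_of_injective _ _ hinj _
      rw [hcount, ih]
      push_cast
      rw [add_comm]
      congr 1
      by_cases h : x = cs.simple i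
      · simp [h]
      · have h2 : ¬ (cs.simple i = x) := fun hc => h hc.symm
        simp [h, h2]

lemma lt_of_nn_eq_one {w t : W} (h : nn cs w t = 1) :
    cs.length (t * w) < cs.length w := by
  obtain ⟨ω, hred, rfl⟩ := cs.exists_reduced_word' w
  rw [nn_wordProd_count] at h
  have hmem : t ∈ cs.leftInvSeq ω := by
    by_contra hmem
    rw [List.count_eq_zero_of_not_mem hmem] at h
    simp at h
  exact (cs.isLeftInversion_of_mem_leftInvSeq hred hmem).2

lemma nn_refl_self {t : W} (ht : cs.IsReflection t) : nn cs t t = 1 := by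
  obtain ⟨u, i, rfl⟩ := ht
  have h1 : u * cs.simple i * u⁻¹ = u * (cs.simple i * u⁻¹) := mul_assoc _ _ _
  rw [h1, nn_mul, nn_mul, nn_simple]
  have e1 : u⁻¹ * (u * (cs.simple i * u⁻¹)) * u = cs.simple i := by group
  rw [e1, if_pos rfl]
  have e2 : (cs.simple i)⁻¹ * cs.simple i * cs.simple i = cs.simple i := by group
  rw [e2, nn_inv, ← h1]
  have : ∀ a : ZMod 2, a + (1 + a) = 1 := by decide
  exact this _

lemma nn_eq_one_iff {w t : W} (ht : cs.IsReflection t) :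
    nn cs w t = 1 ↔ cs.length (t * w) < cs.length w := by
  constructor
  · exact lt_of_nn_eq_one cs
  · intro hlt
    by_contra hne
    have h0 : nn cs w t = 0 := by
      revert hne
      generalize nn cs w t = a
      revert a
      decide
    have h1 : nn cs (t * w) t = 1 := by
      rw [nn_mul, nn_refl_self cs ht]
      have e : t⁻¹ * t * t = t := by group
      rw [e, h0, add_zero]
    have h2 := lt_of_nn_eq_one cs h1
    rw [← mul_assoc, ht.mul_self, one_mul] at h2
    omega

lemma mem_NSet_iff {w t : W} :
    t ∈ NSet cs w ↔ cs.IsReflection t ∧ nn cs w t = 1 := by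
  constructor
  · rintro ⟨hrefl, hlt⟩
    exact ⟨hrefl, (nn_eq_one_iff cs hrefl).2 hlt⟩
  · rintro ⟨hrefl, hnn⟩
    exact ⟨hrefl, lt_of_nn_eq_one cs hnn⟩

/-- Strong exchange: a left inversion of a reduced word appears in its
left inversion sequence. -/
lemma mem_leftInvSeq_of_lt {ω : List S} (hred : cs.IsReduced ω) {t : W}
    (ht : cs.IsReflection t)
    (hlt : cs.length (t * cs.wordProd ω) < cs.length (cs.wordProd ω)) :
    t ∈ cs.leftInvSeq ω := by
  have h1 : nn cs (cs.wordProd ω) t = 1 := (nn_eq_one_iff cs ht).2 hlt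
  rw [nn_wordProd_count] at h1
  by_contra hmem
  rw [List.count_eq_zero_of_not_mem hmem] at h1
  simp at h1

lemma NSet_wordProd {ω : List S} (hred : cs.IsReduced ω) :
    NSet cs (cs.wordProd ω) = {t | t ∈ cs.leftInvSeq ω} := by
  ext t
  constructor
  · rintro ⟨hrefl, hlt⟩
    exact mem_leftInvSeq_of_lt cs hred hrefl hlt
  · intro hmem
    exact cs.isLeftInversion_of_mem_leftInvSeq hred hmem

lemma nn_eq_of_NSet_eq {v v' : W} (h : NSet cs v = NSet cs v') {x : W}
    (hx : cs.IsReflection x) : nn cs v x = nn cs v' x := by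
  by_cases h1 : nn cs v x = 1
  · have : x ∈ NSet cs v := (mem_NSet_iff cs).2 ⟨hx, h1⟩
    rw [h] at this
    rw [h1, ((mem_NSet_iff cs).1 this).2]
  · have h0 : nn cs v x = 0 := by
      revert h1; generalize nn cs v x = a; revert a; decide
    have : x ∉ NSet cs v' := by
      rw [← h]
      intro hc
      exact h1 ((mem_NSet_iff cs).1 hc).2
    have h0' : nn cs v' x = 0 := by
      have hne : ¬ nn cs v' x = 1 := fun hc => this ((mem_NSet_iff cs).2 ⟨hx, hc⟩)
      revert hne; generalize nn cs v' x = a; revert a; decide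
    rw [h0, h0']

lemma eq_of_NSet_eq : ∀ (n : ℕ) (v v' : W), cs.length v = n →
    NSet cs v = NSet cs v' → v = v' := by
  intro n
  induction n using Nat.strong_induction_on with
  | _ n ih =>
    intro v v' hn hN
    by_cases hv : v = 1
    · subst hv
      by_contra hne
      have hv' : v' ≠ 1 := fun hc => hne (by rw [hc])
      obtain ⟨i, hdesc⟩ := cs.exists_leftDescent_of_ne_one hv'
      have : cs.simple i ∈ NSet cs v' := ⟨cs.isReflection_simple i, hdesc⟩
      rw [← hN] at this
      have := this.2
      simp at this
    · obtain ⟨i, hdesc⟩ := cs.exists_leftDescent_of_ne_one hv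
      have key : ∀ t : W, cs.IsReflection t →
          nn cs (cs.simple i * v) t = nn cs (cs.simple i * v') t := by
        intro t hrefl
        have hconj : cs.IsReflection ((cs.simple i)⁻¹ * t * cs.simple i) := by
          have := hrefl.conj (cs.simple i)⁻¹
          simpa [inv_inv] using this
        rw [nn_mul, nn_mul, nn_eq_of_NSet_eq cs hN hconj]
      have hNN : NSet cs (cs.simple i * v) = NSet cs (cs.simple i * v') := by
        ext t
        rw [mem_NSet_iff, mem_NSet_iff]
        constructor <;> rintro ⟨hrefl, hnn⟩ <;> refine ⟨hrefl, ?_⟩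
        · rw [← key t hrefl]; exact hnn
        · rw [key t hrefl]; exact hnn
      have hlen : cs.length (cs.simple i * v) < n := by
        rw [← hn]; exact hdesc
      have := ih (cs.length (cs.simple i * v)) hlen (cs.simple i * v) (cs.simple i * v') rfl hNN
      have h2 := congrArg (fun z => cs.simple i * z) this
      simpa [← mul_assoc, cs.simple_mul_simple_self] using h2

end DGM

end Part3
section Part4

namespace DGM

variable {S : Type*} {W : Type*} [Group W] {M : CoxeterMatrix S}

variable (cs : CoxeterSystem M W)

lemma leftInvSeq_append (ω₁ ω₂ : List S) :
    cs.leftInvSeq (ω₁ ++ ω₂)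
      = cs.leftInvSeq ω₁
        ++ List.map (MulAut.conj (cs.wordProd ω₁)) (cs.leftInvSeq ω₂) := by
  induction ω₁ with
  | nil =>
      rw [List.nil_append, cs.wordProd_nil]
      have : ⇑(MulAut.conj (1 : W)) = id := by
        funext x
        simp [MulAut.conj_apply]
      rw [CoxeterSystem.leftInvSeq]
      show cs.leftInvSeq ω₂ = [] ++ List.map _ (cs.leftInvSeq ω₂)
      rw [this, List.map_id, List.nil_append]
  | cons i ω₁ ih =>
      have hfun : ⇑(MulAut.conj (cs.simple i)) ∘ ⇑(MulAut.conj (cs.wordProd ω₁))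
          = ⇑(MulAut.conj (cs.simple i * cs.wordProd ω₁)) := by
        funext x
        simp only [Function.comp_apply, MulAut.conj_apply]
        group
      rw [List.cons_append, leftInvSeq_cons, ih, leftInvSeq_cons, List.map_append,
        List.map_map, cs.wordProd_cons, List.cons_append, hfun]

/-- Deletion: every word can be shortened to a reduced word with the same product,
using only letters from the original word. -/
lemma exists_reduced_sublist (ω : List S) :
    ∃ ω', cs.IsReduced ω' ∧ cs.wordProd ω' = cs.wordProd ω ∧ ∀ i ∈ ω', i ∈ ω := by
  induction ω with
  | nil =>
      refine ⟨[], ?_, rfl, by simp⟩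
      show cs.length (cs.wordProd []) = _
      simp
  | cons i τ ih =>
      obtain ⟨τ', hred, hprod, hsub⟩ := ih
      rcases cs.length_simple_mul (cs.wordProd τ') i with h | h
      · refine ⟨i :: τ', ?_, ?_, ?_⟩
        · show cs.length (cs.wordProd (i :: τ')) = _
          rw [cs.wordProd_cons, h, hred]
          simp
        · rw [cs.wordProd_cons, cs.wordProd_cons, hprod]
        · intro j hj
          rcases List.mem_cons.mp hj with h' | h'
          · exact h' ▸ List.mem_cons_self
          · exact List.mem_cons_of_mem _ (hsub j h')
      · have hne := cs.length_simple_mul_ne (cs.wordProd τ') i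
        have hlt : cs.length (cs.simple i * cs.wordProd τ') < cs.length (cs.wordProd τ') := by
          omega
        have hmem : cs.simple i ∈ cs.leftInvSeq τ' :=
          mem_leftInvSeq_of_lt cs hred (cs.isReflection_simple i) hlt
        obtain ⟨k, hk, hgetelem⟩ := List.getElem_of_mem hmem
        have hk' : k < τ'.length := by simpa using hk
        have heq : cs.simple i * cs.wordProd τ' = cs.wordProd (τ'.eraseIdx k) := by
          have h2 := cs.getD_leftInvSeq_mul_wordProd τ' k
          rw [List.getD_eq_getElem _ 1 hk, hgetelem] at h2
          exact h2
        refine ⟨τ'.eraseIdx k, ?_, ?_, ?_⟩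
        · show cs.length (cs.wordProd _) = _
          have hlen := List.length_eraseIdx_add_one hk'
          rw [← heq]
          have hred' : cs.length (cs.wordProd τ') = τ'.length := hred
          omega
        · rw [← heq, cs.wordProd_cons, hprod]
        · intro j hj
          exact List.mem_cons_of_mem _ (hsub j ((List.eraseIdx_sublist τ' k).subset hj))

variable (I : Set S)

lemma wordProd_mem_WP {ω : List S} (h : ∀ i ∈ ω, i ∈ I) : cs.wordProd ω ∈ WP cs I := by
  induction ω with
  | nil => rw [cs.wordProd_nil]; exact one_mem _
  | cons i τ ih =>
      rw [cs.wordProd_cons]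
      exact mul_mem
        (Subgroup.subset_closure ⟨i, h i (List.mem_cons_self), rfl⟩)
        (ih fun j hj => h j (List.mem_cons_of_mem _ hj))

lemma WP_exists_word {u : W} (hu : u ∈ WP cs I) :
    ∃ ω : List S, (∀ i ∈ ω, i ∈ I) ∧ cs.wordProd ω = u := by
  induction hu using Subgroup.closure_induction with
  | mem x hx =>
      obtain ⟨i, hi, rfl⟩ := hx
      exact ⟨[i], fun j hj => by rw [List.mem_singleton.mp hj]; exact hi,
        cs.wordProd_singleton i⟩
  | one => exact ⟨[], by simp, cs.wordProd_nil⟩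
  | mul x y hx hy ihx ihy =>
      obtain ⟨ω₁, h₁, hp₁⟩ := ihx
      obtain ⟨ω₂, h₂, hp₂⟩ := ihy
      refine ⟨ω₁ ++ ω₂, ?_, by rw [cs.wordProd_append, hp₁, hp₂]⟩
      intro j hj
      rcases List.mem_append.mp hj with h' | h'
      · exact h₁ j h'
      · exact h₂ j h'
  | inv x hx ihx =>
      obtain ⟨ω, h₁, hp₁⟩ := ihx
      exact ⟨ω.reverse, fun j hj => h₁ j (List.mem_reverse.mp hj),
        by rw [cs.wordProd_reverse, hp₁]⟩

lemma WP_exists_reduced_word {u : W} (hu : u ∈ WP cs I) :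
    ∃ ω : List S, cs.IsReduced ω ∧ (∀ i ∈ ω, i ∈ I) ∧ cs.wordProd ω = u := by
  obtain ⟨ω, hI, hprod⟩ := WP_exists_word cs I hu
  obtain ⟨ω', hred, hprod', hsub⟩ := exists_reduced_sublist cs ω
  exact ⟨ω', hred, fun j hj => hI j (hsub j hj), by rw [hprod', hprod]⟩

lemma simple_mem_WP {i : S} (hi : i ∈ I) : cs.simple i ∈ WP cs I :=
  Subgroup.subset_closure ⟨i, hi, rfl⟩

lemma leftInvSeq_mem_WP {ω : List S} (h : ∀ i ∈ ω, i ∈ I) :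
    ∀ t ∈ cs.leftInvSeq ω, t ∈ WP cs I := by
  induction ω with
  | nil => simp
  | cons i τ ih =>
      intro t ht
      rw [leftInvSeq_cons] at ht
      rcases List.mem_cons.mp ht with rfl | hmem
      · exact simple_mem_WP cs I (h i (List.mem_cons_self))
      · obtain ⟨t', ht', rfl⟩ := List.mem_map.mp hmem
        have h1 := ih (fun j hj => h j (List.mem_cons_of_mem _ hj)) t' ht'
        have hsi : cs.simple i ∈ WP cs I := simple_mem_WP cs I (h i (List.mem_cons_self))
        show MulAut.conj (cs.simple i) t' ∈ _
        rw [MulAut.conj_apply]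
        exact mul_mem (mul_mem hsi h1) (inv_mem hsi)

/-- If `d` has minimal length in its coset `W_I d`, then lengths add:
`ℓ(ud) = ℓ(u) + ℓ(d)` for all `u ∈ W_I`. -/
lemma length_mul_of_min (d : W)
    (hd : ∀ t, cs.IsReflection t → t ∈ WP cs I → ¬ cs.length (t * d) < cs.length d) :
    ∀ (n : ℕ) (u : W), u ∈ WP cs I → cs.length u = n →
      cs.length (u * d) = cs.length u + cs.length d := by
  intro n
  induction n using Nat.strong_induction_on with
  | _ n ih =>
    intro u hu hn
    rcases Nat.eq_zero_or_pos n with h0 | hpos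
    · have h1 : u = 1 := cs.length_eq_zero_iff.mp (by rw [hn, h0])
      subst h1
      simp
    · obtain ⟨α, hαred, hαI, hαu⟩ := WP_exists_reduced_word cs I hu
      have hαlen : α.length = n := by
        rw [← hn, ← hαu]
        exact hαred.symm
      cases α with
      | nil => simp at hαlen; omega
      | cons i α₀ =>
        have hα₀I : ∀ j ∈ α₀, j ∈ I := fun j hj => hαI j (List.mem_cons_of_mem _ hj)
        have hiI : i ∈ I := hαI i (List.mem_cons_self)
        have hu0 : cs.wordProd α₀ ∈ WP cs I := wordProd_mem_WP cs I hα₀I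
        have hα₀red : cs.IsReduced α₀ := by
          have := CoxeterSystem.IsReduced.drop hαred (j := 1)
          simpa using this
        have hlen0 : cs.length (cs.wordProd α₀) = n - 1 := by
          rw [hα₀red]
          simp at hαlen
          omega
        have ihres := ih (n - 1) (by omega) (cs.wordProd α₀) hu0 hlen0
        obtain ⟨β, hβred, hβd⟩ := cs.exists_reduced_word' d
        have hud : u * d = cs.simple i * (cs.wordProd α₀ * d) := by
          rw [← hαu, cs.wordProd_cons, mul_assoc]
        have hprodγ : cs.wordProd (α₀ ++ β) = cs.wordProd α₀ * d := by
          rw [cs.wordProd_append, ← hβd]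
        have hγred : cs.IsReduced (α₀ ++ β) := by
          show cs.length _ = _
          rw [hprodγ, ihres, hα₀red, hβd, hβred, List.length_append]
        rcases cs.length_simple_mul (cs.wordProd α₀ * d) i with hup | hdown
        · rw [hud, hup, ihres, hn, hlen0]
          omega
        · exfalso
          have hne := cs.length_simple_mul_ne (cs.wordProd α₀ * d) i
          have hlt : cs.length (cs.simple i * (cs.wordProd α₀ * d))
              < cs.length (cs.wordProd α₀ * d) := by omega
          have hmem : cs.simple i ∈ cs.leftInvSeq (α₀ ++ β) := by
            apply mem_leftInvSeq_of_lt cs hγred (cs.isReflection_simple i)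
            rw [hprodγ]
            exact hlt
          rw [leftInvSeq_append] at hmem
          rcases List.mem_append.mp hmem with hm | hm
          · have h2 := cs.isLeftInversion_of_mem_leftInvSeq hα₀red hm
            have h3 : cs.simple i * cs.wordProd α₀ = u := by
              rw [← hαu, cs.wordProd_cons]
            have h4 := h2.2
            rw [h3] at h4
            omega
          · obtain ⟨t, ht, heq⟩ := List.mem_map.mp hm
            have htrefl := cs.isReflection_of_mem_leftInvSeq β ht
            have htW : t ∈ WP cs I := by
              have h5 : t = (cs.wordProd α₀)⁻¹ * cs.simple i * cs.wordProd α₀ := by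
                rw [← heq, MulAut.conj_apply]
                group
              rw [h5]
              exact mul_mem (mul_mem (inv_mem hu0) (simple_mem_WP cs I hiI)) hu0
            have hlt2 : cs.length (t * d) < cs.length d := by
              have h6 := cs.isLeftInversion_of_mem_leftInvSeq hβred ht
              rw [← hβd] at h6
              exact h6.2
            exact hd t htrefl htW hlt2

end DGM

end Part4
section Part5

namespace DGM

variable {S : Type*} {W : Type*} [Group W] {M : CoxeterMatrix S}

/-- `π_I(w) := w · t_I(w)⁻¹` is the unique element `v ∈ W_I` such that
`N(v) = N(w) ∩ T_I`. -/
theorem piW_unique (cs : CoxeterSystem M W) (I : Set S) (w : W) :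
    ∀ v : W,
      (v ∈ WP cs I ∧ NSet cs v = NSet cs w ∩ {t | cs.IsReflection t ∧ t ∈ WP cs I}) ↔
        v = w * (tP cs I w)⁻¹ := by
  intro v
  have hex : ∃ x : W, (∃ u ∈ WP cs I, x = u * w) ∧
      ∀ v', (∃ u ∈ WP cs I, v' = u * w) → cs.length x ≤ cs.length v' := by
    have hPex : ∃ n : ℕ, ∃ u ∈ WP cs I, cs.length (u * w) = n :=
      ⟨cs.length (1 * w), 1, one_mem _, rfl⟩
    obtain ⟨u₀, hu₀, hlen⟩ := Nat.find_spec hPex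
    refine ⟨u₀ * w, ⟨u₀, hu₀, rfl⟩, ?_⟩
    rintro v' ⟨u', hu', rfl⟩
    rw [hlen]
    exact Nat.find_min' hPex ⟨u', hu', rfl⟩
  have hspec : (∃ u ∈ WP cs I, tP cs I w = u * w) ∧
      ∀ v', (∃ u ∈ WP cs I, v' = u * w) → cs.length (tP cs I w) ≤ cs.length v' :=
    Classical.epsilon_spec hex
  obtain ⟨⟨u₀, hu₀, hdu⟩, hmin⟩ := hspec
  set d := tP cs I w with hdd
  have hp : w * d⁻¹ = u₀⁻¹ := by rw [hdu]; group
  have hpW : w * d⁻¹ ∈ WP cs I := hp ▸ inv_mem hu₀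
  have hdmin : ∀ t, cs.IsReflection t → t ∈ WP cs I →
      ¬ cs.length (t * d) < cs.length d := by
    intro t ht htW hlt
    have hle : cs.length d ≤ cs.length (t * d) :=
      hmin (t * d) ⟨t * u₀, mul_mem htW hu₀, by rw [hdu, mul_assoc]⟩
    omega
  have hNp : NSet cs (w * d⁻¹)
      = NSet cs w ∩ {t | cs.IsReflection t ∧ t ∈ WP cs I} := by
    obtain ⟨α, hαred, hαI, hαp⟩ := WP_exists_reduced_word cs I hpW
    obtain ⟨β, hβred, hβd⟩ := cs.exists_reduced_word' d
    have hw : cs.wordProd (α ++ β) = w := by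
      rw [cs.wordProd_append, hαp, ← hβd]
      group
    have hlen : cs.length (w * d⁻¹ * d) = cs.length (w * d⁻¹) + cs.length d :=
      length_mul_of_min cs I d hdmin (cs.length (w * d⁻¹)) (w * d⁻¹) hpW rfl
    have hpd : w * d⁻¹ * d = w := by group
    have hγred : cs.IsReduced (α ++ β) := by
      show cs.length _ = _
      rw [hw, ← hpd, hlen, List.length_append, ← hαp, hαred, hβd, hβred]
    have hNw : NSet cs w = {t | t ∈ cs.leftInvSeq (α ++ β)} := by
      rw [← hw]
      exact NSet_wordProd cs hγred
    have hNp' : NSet cs (w * d⁻¹) = {t | t ∈ cs.leftInvSeq α} := by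
      rw [← hαp]
      exact NSet_wordProd cs hαred
    rw [hNw, hNp']
    ext t
    simp only [Set.mem_inter_iff, Set.mem_setOf_eq]
    rw [leftInvSeq_append]
    constructor
    · intro hmem
      exact ⟨List.mem_append_left _ hmem, cs.isReflection_of_mem_leftInvSeq α hmem,
        leftInvSeq_mem_WP cs I hαI t hmem⟩
    · rintro ⟨hmem, hrefl, htW⟩
      rcases List.mem_append.mp hmem with hm | hm
      · exact hm
      · exfalso
        obtain ⟨t', ht', heq⟩ := List.mem_map.mp hm
        have ht'refl : cs.IsReflection t' := cs.isReflection_of_mem_leftInvSeq β ht'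
        have ht'W : t' ∈ WP cs I := by
          have h5 : t' = (cs.wordProd α)⁻¹ * t * cs.wordProd α := by
            rw [← heq, MulAut.conj_apply]
            group
          rw [h5, hαp]
          exact mul_mem (mul_mem (inv_mem hpW) htW) hpW
        have hlt2 : cs.length (t' * d) < cs.length d := by
          have h6 := cs.isLeftInversion_of_mem_leftInvSeq hβred ht'
          rw [← hβd] at h6
          exact h6.2
        exact hdmin t' ht'refl ht'W hlt2
  constructor
  · rintro ⟨hvW, hvN⟩
    exact eq_of_NSet_eq cs (cs.length v) v (w * d⁻¹) rfl (hvN.trans hNp.symm)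
  · rintro rfl
    exact ⟨hpW, hNp⟩

end DGM

end Part5
end

section
/- There exists a group homomorphism f : B → (⊕_{t∈T} ℤ) ⋊ W, where W acts on the free abelian group ⊕_{t∈T} ℤ of finitely supported functions T → ℤ by permuting the basis according to its conjugation action on T, such that f(σ_s) = (δ_s, s) for every s ∈ S, where δ_s is the basis element supported at s. -/
open scoped Classical

namespace DGM

variable {S : Type*} {W : Type*} [Group W] {M : CoxeterMatrix S}

/-- The braid relators defining the Artin group of the Coxeter matrix `M`:
for `s ≠ t` with `m := M s t` finite (i.e. nonzero), the alternating product
`σ_s σ_t σ_s ⋯` with `m` factors equals the alternating product with `m` factors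
of the letters in the other order. -/
def artinRels (M : CoxeterMatrix S) : Set (FreeGroup S) :=
  {r | ∃ s t : S, s ≠ t ∧ M s t ≠ 0 ∧
    r = ((CoxeterSystem.alternatingWord s t (M s t)).map FreeGroup.of).prod *
        (((CoxeterSystem.alternatingWord t s (M s t)).map FreeGroup.of).prod)⁻¹}

/-- The Artin group `B` of the Coxeter matrix `M`. -/
abbrev ArtinGroup (M : CoxeterMatrix S) : Type _ := PresentedGroup (artinRels M)

/-- The generator `σ_s` of the Artin group. -/
def sigma (M : CoxeterMatrix S) (s : S) : ArtinGroup M := PresentedGroup.of s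

/-- The element `σ_{s₁}^{ε₁} ⋯ σ_{s_k}^{ε_k}` of the Artin group represented by a word
on `S × {±1}`. -/
def wordToB (M : CoxeterMatrix S) (b : List (S × Bool)) : ArtinGroup M :=
  (b.map (fun p => if p.2 then sigma M p.1 else (sigma M p.1)⁻¹)).prod

section Aux

open CoxeterSystem List

variable (cs : CoxeterSystem M W)

/-- Conjugation permutation on the set of reflections. -/
def refConj (w : W) : {t : W // cs.IsReflection t} ≃ {t : W // cs.IsReflection t} where
  toFun t := ⟨w * t.1 * w⁻¹, t.2.conj w⟩
  invFun t := ⟨w⁻¹ * t.1 * w, by simpa using t.2.conj w⁻¹⟩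
  left_inv t := by ext; simp [mul_assoc]
  right_inv t := by ext; simp [mul_assoc]

lemma refConj_one : refConj cs 1 = Equiv.refl _ :=
  Equiv.ext fun t => Subtype.ext (by simp [refConj])

lemma refConj_mul (w₁ w₂ : W) :
    refConj cs (w₁ * w₂) = (refConj cs w₂).trans (refConj cs w₁) :=
  Equiv.ext fun t => Subtype.ext (by simp [refConj, mul_assoc])

/-- The action of `W` on the free abelian group on the set of reflections. -/
noncomputable def phi : W →* MulAut (Multiplicative ({t : W // cs.IsReflection t} →₀ ℤ)) where
  toFun w := AddEquiv.toMultiplicative (Finsupp.domCongr (refConj cs w))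
  map_one' := by
    ext x
    simp [refConj_one, AddEquiv.toMultiplicative, Finsupp.domCongr]
  map_mul' w₁ w₂ := by
    ext x
    simp [refConj_mul, AddEquiv.toMultiplicative, Finsupp.domCongr,
      Finsupp.equivMapDomain_trans]

lemma toAdd_phi (w : W) (x : Multiplicative ({t : W // cs.IsReflection t} →₀ ℤ)) :
    Multiplicative.toAdd (phi cs w x) =
      Finsupp.equivMapDomain (refConj cs w) (Multiplicative.toAdd x) := rfl

/-- The image of the generator `σ_s` in the semidirect product. -/
noncomputable def gen (s : S) :
    Multiplicative ({t : W // cs.IsReflection t} →₀ ℤ) ⋊[phi cs] W :=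
  ⟨Multiplicative.ofAdd (Finsupp.single ⟨cs.simple s, cs.isReflection_simple s⟩ 1), cs.simple s⟩

lemma gen_right (l : List S) : ((l.map (gen cs)).prod).right = cs.wordProd l := by
  induction l with
  | nil => simp
  | cons i l ih => simp [gen, cs.wordProd_cons, ih]

lemma gen_left (l : List S) :
    Finsupp.mapDomain Subtype.val (Multiplicative.toAdd ((l.map (gen cs)).prod).left) =
      ((cs.leftInvSeq l).map (fun w => Finsupp.single w (1 : ℤ))).sum := by
  induction l with
  | nil => simp
  | cons i l ih =>
    rw [List.map_cons, List.prod_cons, SemidirectProduct.mul_left, CoxeterSystem.leftInvSeq]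
    rw [List.map_cons, List.sum_cons]
    have : Multiplicative.toAdd
          ((gen cs i).left * (phi cs (gen cs i).right) ((l.map (gen cs)).prod).left)
        = Finsupp.single (⟨cs.simple i, cs.isReflection_simple i⟩ : {t : W // cs.IsReflection t}) 1
          + Finsupp.equivMapDomain (refConj cs (cs.simple i))
              (Multiplicative.toAdd ((l.map (gen cs)).prod).left) := rfl
    rw [this, Finsupp.mapDomain_add, Finsupp.mapDomain_single]
    congr 1
    rw [Finsupp.equivMapDomain_eq_mapDomain, ← Finsupp.mapDomain_comp]
    have hcomp : (Subtype.val ∘ (refConj cs (cs.simple i) :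
          {t : W // cs.IsReflection t} → {t : W // cs.IsReflection t}))
        = (fun u => cs.simple i * u * (cs.simple i)⁻¹) ∘ Subtype.val := rfl
    rw [hcomp, Finsupp.mapDomain_comp, ih]
    rw [← Finsupp.mapDomain.addMonoidHom_apply, map_list_sum, List.map_map, List.map_map]
    congr 1
    apply List.map_congr_left
    intro w _
    simp [Finsupp.mapDomain.addMonoidHom_apply, Finsupp.mapDomain_single]

lemma aux_hab {G : Type*} [Group G] (a b : G) (k : ℕ) : b * (a*b)^k = (b*a)^k * b :=
  (SemiconjBy.pow_right (show SemiconjBy b (a*b) (b*a) by simp [SemiconjBy, mul_assoc]) k)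

lemma aux_even {G : Type*} [Group G] (a b : G) (k : ℕ) :
    (b*a)^k * b * (a*b)^k = b * (a*b)^(k+k) := by
  rw [← aux_hab, mul_assoc, ← pow_add]

lemma aux_odd {G : Type*} [Group G] (a b : G) (k : ℕ) :
    a * (b*a)^k * b * ((a*b)^k * a) = a * (b*a)^(2*k+1) := by
  have h1 := aux_hab a b k
  have h2 := aux_hab b a (2*k+1)
  rw [mul_assoc a ((b*a)^k) b, ← h1, h2]
  have : (a*b)^(2*k+1) = a * b * ((a*b)^k * (a*b)^k) := by
    rw [← pow_add, ← pow_succ']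
    congr 1
    omega
  rw [this]
  simp [mul_assoc]

lemma conj_simple_eq (i i' : S) (m : ℕ) :
    cs.wordProd (alternatingWord i' i m) * cs.simple i' *
        (cs.wordProd (alternatingWord i' i m))⁻¹ =
      cs.wordProd (alternatingWord (if Even m then i else i')
        (if Even m then i' else i) (2 * m + 1)) := by
  have hodd : ¬ Even (2 * m + 1) := by simp [Nat.even_add_one, parity_simps]
  set a := cs.simple i with ha
  set b := cs.simple i' with hb
  by_cases h : Even m
  · simp only [h, if_true]
    rw [cs.prod_alternatingWord_eq_mul_pow, cs.prod_alternatingWord_eq_mul_pow]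
    simp only [h, hodd, if_true, if_false]
    obtain ⟨k, hk⟩ := h
    have h2 : m / 2 = k := by omega
    have h3 : (2 * m + 1) / 2 = m := by omega
    rw [h2, h3, one_mul]
    have hinv : ((b * a) ^ k)⁻¹ = (a * b) ^ k := by
      rw [← inv_pow, mul_inv_rev, cs.inv_simple, cs.inv_simple, ← ha, ← hb]
    rw [hinv, hk, aux_even]
  · simp only [h, if_false]
    rw [cs.prod_alternatingWord_eq_mul_pow, cs.prod_alternatingWord_eq_mul_pow]
    simp only [h, hodd, if_true, if_false]
    obtain ⟨k, hk⟩ := Nat.not_even_iff_odd.mp h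
    have h2 : m / 2 = k := by omega
    have h3 : (2 * m + 1) / 2 = m := by omega
    rw [h2, h3]
    have hinv : ((a * (b * a) ^ k))⁻¹ = (a * b) ^ k * a := by
      rw [mul_inv_rev, ← inv_pow, mul_inv_rev, cs.inv_simple, cs.inv_simple, ← ha, ← hb]
    rw [hinv, hk, aux_odd]

lemma lis_alternatingWord (i i' : S) (m : ℕ) :
    cs.leftInvSeq (alternatingWord i i' m) =
      (List.range m).map (fun j => cs.wordProd (alternatingWord
        (if Even m then i' else i) (if Even m then i else i') (2 * j + 1))) := by
  induction m generalizing i i' with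
  | zero => simp [alternatingWord]
  | succ m ih =>
    rw [alternatingWord_succ, cs.leftInvSeq_concat, ih i' i]
    rw [List.range_succ, List.map_append, List.concat_eq_append]
    have e1 : (if Even (m + 1) then i' else i) = (if Even m then i else i') := by
      by_cases h : Even m <;> simp [h, Nat.even_add_one]
    have e2 : (if Even (m + 1) then i else i') = (if Even m then i' else i) := by
      by_cases h : Even m <;> simp [h, Nat.even_add_one]
    rw [e1, e2]
    congr 1
    simp only [List.map_singleton]
    rw [conj_simple_eq cs i i' m]

lemma lis_braid_reverse (i i' : S) :
    cs.leftInvSeq (alternatingWord i' i (M i i')) =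
      (cs.leftInvSeq (alternatingWord i i' (M i i'))).reverse := by
  have hsym : M i' i = M i i' := M.symmetric i' i
  set m := M i i' with hm
  rw [lis_alternatingWord, lis_alternatingWord]
  apply List.ext_getElem (by simp)
  intro j h1 h2
  simp only [List.getElem_reverse, List.getElem_map, List.getElem_range, List.length_map,
    List.length_range]
  have hj : j < m := by simpa using h1
  have hM : M (if Even m then i else i') (if Even m then i' else i) = m := by
    by_cases h : Even m <;> simp [h, hsym, ← hm]
  have key := cs.prod_alternatingWord_eq_prod_alternatingWord_sub
    (if Even m then i else i') (if Even m then i' else i) (2 * j + 1)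
    (by rw [hM]; omega)
  rw [key, hM]
  have harg : m * 2 - (2 * j + 1) = 2 * (m - 1 - j) + 1 := by omega
  rw [harg]

lemma braid_sum_eq (i i' : S) :
    ((cs.leftInvSeq (alternatingWord i' i (M i i'))).map
        (fun w => Finsupp.single w (1 : ℤ))).sum =
      ((cs.leftInvSeq (alternatingWord i i' (M i i'))).map
        (fun w => Finsupp.single w (1 : ℤ))).sum := by
  rw [lis_braid_reverse, List.map_reverse, List.sum_reverse]

lemma braid_wordProd (i i' : S) :
    cs.wordProd (alternatingWord i i' (M i i')) =
      cs.wordProd (alternatingWord i' i (M i i')) := by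
  have := cs.prod_alternatingWord_eq_prod_alternatingWord_sub i i' (M i i') (by omega)
  simpa [show M i i' * 2 - M i i' = M i i' by omega] using this

lemma braid_prod_eq (i i' : S) :
    (((alternatingWord i i' (M i i')).map (gen cs)).prod) =
      (((alternatingWord i' i (M i i')).map (gen cs)).prod) := by
  apply SemidirectProduct.ext
  · apply Multiplicative.toAdd.injective
    apply Finsupp.mapDomain_injective Subtype.val_injective
    rw [gen_left, gen_left, braid_sum_eq]
  · rw [gen_right, gen_right, braid_wordProd]

lemma rels_hold : ∀ r ∈ artinRels M, FreeGroup.lift (gen cs) r = 1 := by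
  rintro r ⟨s, t, _, _, rfl⟩
  rw [map_mul, map_inv, map_list_prod, map_list_prod, List.map_map, List.map_map]
  have : (FreeGroup.lift (gen cs)) ∘ FreeGroup.of = gen cs := by
    funext x; simp
  rw [this, braid_prod_eq cs s t, mul_inv_cancel]

end Aux

/-- There is a group homomorphism `f : B → (⊕_{t ∈ T} ℤ) ⋊ W` (where `W` permutes the
basis of the free abelian group on the set `T` of reflections by conjugation) with
`f(σ_s) = (δ_s, s)` for all `s ∈ S`.  Here the semidirect product is encoded concretely:
`f` is a map to pairs satisfying the semidirect-product multiplication rule. -/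
theorem exists_N_hom (cs : CoxeterSystem M W) :
    ∃ f : ArtinGroup M → ({t : W // cs.IsReflection t} →₀ ℤ) × W,
      (∀ x y : ArtinGroup M,
        f (x * y) =
          ((f x).1 + Finsupp.mapDomain
              (fun t : {t : W // cs.IsReflection t} =>
                (⟨(f x).2 * t.1 * (f x).2⁻¹, t.2.conj (f x).2⟩ :
                  {t : W // cs.IsReflection t}))
              (f y).1,
            (f x).2 * (f y).2)) ∧
      (∀ s : S,
        f (sigma M s) =
          (Finsupp.single ⟨cs.simple s, cs.isReflection_simple s⟩ 1, cs.simple s)) := by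
  classical
  set E : ArtinGroup M →* Multiplicative ({t : W // cs.IsReflection t} →₀ ℤ) ⋊[phi cs] W :=
    PresentedGroup.toGroup (rels_hold cs) with hE
  refine ⟨fun x => (Multiplicative.toAdd (E x).left, (E x).right), fun x y => ?_, fun s => ?_⟩
  · simp only
    rw [map_mul]
    refine Prod.ext ?_ ?_
    · show Multiplicative.toAdd ((E x * E y).left) = _
      rw [SemidirectProduct.mul_left]
      rw [toAdd_mul, toAdd_phi, Finsupp.equivMapDomain_eq_mapDomain]
      rfl
    · show (E x * E y).right = _
      rw [SemidirectProduct.mul_right]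
  · simp only
    have : E (sigma M s) = gen cs s := PresentedGroup.toGroup.of (rels_hold cs)
    rw [this]
    rfl

end DGM
end
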